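/- arXiv:1305.1860 — 10 statements merged into one kernel-verified Lean document; each statement's English description precedes it below -/
import Mathlib

section
/- Let n be a natural number and let L_1,…,L_n be functions from (0,∞) to (−∞,∞] such that for each j there exists t > 0 with L_j(t) < ∞. Then for every u ∈ ℝ, the generalized inverse of the Legendre–Fenchel transform of the Hölder convolution equals the sum of the generalized inverses: (L_1 ⊞ ⋯ ⊞ L_n)^{*←}(u) = L_1^{*←}(u) + ⋯ + L_n^{*←}(u) (the sum being well defined in [−∞,∞] since each summand is < ∞). -/
open Set MeasureTheory Filter

/-- Legendre–Fenchel transform `L^*(x) = sup_{t>0} [t·x − L(t)]`, with values in `[-∞,∞]`. -/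
noncomputable def LF (L : ℝ → EReal) (x : ℝ) : EReal :=
  ⨆ (t : ℝ) (_ : 0 < t), ((t * x : ℝ) : EReal) - L t

/-- Smallest generalized inverse `L^{*←}(u) = inf {x ∈ ℝ : L^*(x) ≥ u}`, with `inf ∅ = ∞`. -/
noncomputable def geInv (L : ℝ → EReal) (u : ℝ) : EReal :=
  sInf ((fun x : ℝ => (x : EReal)) '' {x : ℝ | (u : EReal) ≤ LF L x})

/-- Largest generalized inverse `L^{*⇐}(u) = inf {x ∈ ℝ : L^*(x) > u}`, with `inf ∅ = ∞`. -/
noncomputable def tgeInv (L : ℝ → EReal) (u : ℝ) : EReal :=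
  sInf ((fun x : ℝ => (x : EReal)) '' {x : ℝ | (u : EReal) < LF L x})

/-- Hölder convolution `(L_1 ⊞ ⋯ ⊞ L_n)(t) = inf { Σ_j α_j L_j(t/α_j) : α_j > 0, Σ_j α_j = 1 }`,
with `inf ∅ = ∞`. -/
noncomputable def hconv (n : ℕ) (L : Fin n → ℝ → EReal) (t : ℝ) : EReal :=
  ⨅ (α : Fin n → ℝ) (_ : (∀ j, 0 < α j) ∧ ∑ j, α j = 1),
    ∑ j, (α j : EReal) * L j (t / α j)

/-- Cramér–Chernoff function `L_X(t) = ln E e^{tX}`, with values in `(-∞,∞]`. -/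
noncomputable def cramer {Ω : Type*} [MeasurableSpace Ω] (μ : Measure Ω) (X : Ω → ℝ)
    (t : ℝ) : EReal :=
  ENNReal.log (∫⁻ ω, ENNReal.ofReal (Real.exp (t * X ω)) ∂μ)

section Aux


private lemma ereal_coe_sum {ι : Type*} (s : Finset ι) (f : ι → ℝ) :
    (↑(∑ j ∈ s, f j) : EReal) = ∑ j ∈ s, (f j : EReal) :=
  map_sum (⟨⟨Real.toEReal, EReal.coe_zero⟩, EReal.coe_add⟩ : ℝ →+ EReal) f s

private lemma ereal_sum_ne_bot {ι : Type*} {s : Finset ι} {f : ι → EReal}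
    (h : ∀ i ∈ s, f i ≠ ⊥) : ∑ i ∈ s, f i ≠ ⊥ := by
  classical
  induction s using Finset.induction_on with
  | empty => simp
  | insert a s' hnot ih =>
    rw [Finset.sum_insert hnot]
    intro hc
    rcases EReal.add_eq_bot_iff.1 hc with h1 | h2
    · exact h a (Finset.mem_insert_self a s') h1
    · exact ih (fun i hi => h i (Finset.mem_insert_of_mem hi)) h2

private lemma ereal_sum_ne_top {ι : Type*} {s : Finset ι} {f : ι → EReal}
    (h : ∀ i ∈ s, f i ≠ ⊤) : ∑ i ∈ s, f i ≠ ⊤ := by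
  classical
  induction s using Finset.induction_on with
  | empty => simp
  | insert a s' hnot ih =>
    rw [Finset.sum_insert hnot]
    have h1 : f a ≠ ⊤ := h a (Finset.mem_insert_self a s')
    have h2 : ∑ i ∈ s', f i ≠ ⊤ := ih (fun i hi => h i (Finset.mem_insert_of_mem hi))
    exact (EReal.add_lt_top h1 h2).ne

private lemma ereal_sum_eq_bot {ι : Type*} {s : Finset ι} {f : ι → EReal}
    {j : ι} (hj : j ∈ s) (hjb : f j = ⊥) : ∑ i ∈ s, f i = ⊥ := by
  classical
  rw [← Finset.add_sum_erase _ _ hj, hjb, EReal.bot_add]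

private lemma ereal_sum_eq_top {ι : Type*} {s : Finset ι} {f : ι → EReal}
    (h : ∀ i ∈ s, f i ≠ ⊥) {j : ι} (hj : j ∈ s) (hjt : f j = ⊤) : ∑ i ∈ s, f i = ⊤ := by
  classical
  rw [← Finset.add_sum_erase _ _ hj, hjt]
  exact EReal.top_add_of_ne_bot
    (ereal_sum_ne_bot fun i hi => h i (Finset.mem_of_mem_erase hi))

private lemma lf_mono (L : ℝ → EReal) : Monotone (LF L) := by
  intro x y hxy
  refine iSup_mono fun t => ?_
  refine iSup_mono' fun ht => ⟨ht, ?_⟩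
  exact EReal.sub_le_sub (EReal.coe_le_coe_iff.2 (by nlinarith)) le_rfl

private lemma lt_lf_iff {L : ℝ → EReal} {u x : ℝ} :
    (u : EReal) < LF L x ↔ ∃ t : ℝ, 0 < t ∧ (u : EReal) < ((t * x : ℝ) : EReal) - L t := by
  simp [LF, lt_iSup_iff]

private lemma single_le_lf (L : ℝ → EReal) {t : ℝ} (ht : 0 < t) (x : ℝ) :
    ((t * x : ℝ) : EReal) - L t ≤ LF L x :=
  le_iSup₂ (f := fun t (_ : 0 < t) => ((t * x : ℝ) : EReal) - L t) t ht

private lemma exists_lt_lf (L : ℝ → EReal) (h : ∃ t : ℝ, 0 < t ∧ L t ≠ ⊤) (u : ℝ) :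
    ∃ x : ℝ, (u : EReal) < LF L x := by
  obtain ⟨t, ht, hne⟩ := h
  by_cases hb : L t = ⊥
  · refine ⟨0, lt_of_lt_of_le ?_ (single_le_lf L ht 0)⟩
    simp [hb]
  · set ℓ := (L t).toReal with hℓ
    refine ⟨(u + ℓ + 1) / t, lt_of_lt_of_le ?_ (single_le_lf L ht _)⟩
    have hLt : L t = (ℓ : EReal) := (EReal.coe_toReal hne hb).symm
    rw [hLt, ← EReal.coe_sub, EReal.coe_lt_coe_iff]
    have : t * ((u + ℓ + 1) / t) = u + ℓ + 1 := by field_simp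
    rw [this]; linarith

/-- If `∑ b < r` with all `b j ≠ ⊤`, choose reals `c j > b j` with `∑ c ≤ r`. -/
private lemma exists_gt_sum {ι : Type*} (s : Finset ι) (b : ι → EReal)
    (hb : ∀ j ∈ s, b j ≠ ⊤) (r : ℝ) (hr : ∑ j ∈ s, b j < (r : EReal)) :
    ∃ c : ι → ℝ, (∀ j ∈ s, b j < (c j : EReal)) ∧ ∑ j ∈ s, c j ≤ r := by
  classical
  induction s using Finset.induction_on generalizing r with
  | empty =>
    refine ⟨fun _ => 0, by simp, ?_⟩
    simpa using (EReal.coe_le_coe_iff.1 (by simpa using hr.le))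
  | insert a s' hnot ih =>
    rw [Finset.sum_insert hnot] at hr
    have hba : b a ≠ ⊤ := hb a (Finset.mem_insert_self a s')
    have hbs : ∑ j ∈ s', b j ≠ ⊤ :=
      ereal_sum_ne_top fun j hj => hb j (Finset.mem_insert_of_mem hj)
    obtain ⟨p, q, hp, hq, hpq⟩ :
        ∃ p q : ℝ, b a < (p : EReal) ∧ (∑ j ∈ s', b j) < (q : EReal) ∧ p + q ≤ r := by
      by_cases h1 : b a = ⊥
      · obtain ⟨q, hq1, hq2⟩ := EReal.exists_between_coe_real (lt_of_le_of_ne le_top hbs)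
        exact ⟨r - q, q, h1 ▸ bot_lt_iff_ne_bot.2 (EReal.coe_ne_bot _), hq1, by linarith⟩
      · by_cases h2 : ∑ j ∈ s', b j = ⊥
        · obtain ⟨p, hp1, hp2⟩ := EReal.exists_between_coe_real (lt_of_le_of_ne le_top hba)
          exact ⟨p, r - p, hp1, h2 ▸ bot_lt_iff_ne_bot.2 (EReal.coe_ne_bot _), by linarith⟩
        · set pa := (b a).toReal with hpa
          set ps := (∑ j ∈ s', b j).toReal with hps
          have ea : b a = (pa : EReal) := (EReal.coe_toReal hba h1).symm
          have es : (∑ j ∈ s', b j) = (ps : EReal) := (EReal.coe_toReal hbs h2).symm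
          have hlt : pa + ps < r := by
            rw [ea, es, ← EReal.coe_add, EReal.coe_lt_coe_iff] at hr
            exact hr
          refine ⟨pa + (r - pa - ps) / 2, ps + (r - pa - ps) / 2, ?_, ?_, by linarith⟩
          · rw [ea, EReal.coe_lt_coe_iff]; linarith
          · rw [es, EReal.coe_lt_coe_iff]; linarith
    obtain ⟨c, hc1, hc2⟩ := ih (fun j hj => hb j (Finset.mem_insert_of_mem hj)) q hq
    refine ⟨Function.update c a p, ?_, ?_⟩
    · intro j hj
      rcases Finset.mem_insert.1 hj with rfl | hj'
      · simpa using hp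
      · have hne : j ≠ a := fun h => hnot (by rwa [h] at hj')
        simpa [Function.update_of_ne hne] using hc1 j hj'
    · rw [Finset.sum_insert hnot, Function.update_self]
      have heq : ∑ j ∈ s', Function.update c a p j = ∑ j ∈ s', c j :=
        Finset.sum_congr rfl fun j hj => Function.update_of_ne (fun h => hnot (by rwa [h] at hj)) _ _
      rw [heq]; linarith

/-- If `r < ∑ b` with all `b j ≠ ⊥`, choose reals `c j < b j` with `r ≤ ∑ c`. -/
private lemma exists_lt_sum {ι : Type*} (s : Finset ι) (b : ι → EReal)
    (hb : ∀ j ∈ s, b j ≠ ⊥) (r : ℝ) (hr : (r : EReal) < ∑ j ∈ s, b j) :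
    ∃ c : ι → ℝ, (∀ j ∈ s, (c j : EReal) < b j) ∧ r ≤ ∑ j ∈ s, c j := by
  classical
  induction s using Finset.induction_on generalizing r with
  | empty =>
    refine ⟨fun _ => 0, by simp, ?_⟩
    simpa using (EReal.coe_le_coe_iff.1 (by simpa using hr.le))
  | insert a s' hnot ih =>
    rw [Finset.sum_insert hnot] at hr
    have hba : b a ≠ ⊥ := hb a (Finset.mem_insert_self a s')
    have hbs : ∑ j ∈ s', b j ≠ ⊥ :=
      ereal_sum_ne_bot fun j hj => hb j (Finset.mem_insert_of_mem hj)
    obtain ⟨p, q, hp, hq, hpq⟩ :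
        ∃ p q : ℝ, (p : EReal) < b a ∧ (q : EReal) < (∑ j ∈ s', b j) ∧ r ≤ p + q := by
      by_cases h1 : b a = ⊤
      · obtain ⟨q, hq1, hq2⟩ := EReal.exists_between_coe_real (Ne.bot_lt hbs)
        exact ⟨r - q, q, h1 ▸ lt_top_iff_ne_top.2 (EReal.coe_ne_top _), hq2, by linarith⟩
      · by_cases h2 : (∑ j ∈ s', b j) = ⊤
        · obtain ⟨p, hp1, hp2⟩ := EReal.exists_between_coe_real (Ne.bot_lt hba)
          exact ⟨p, r - p, hp2, h2 ▸ lt_top_iff_ne_top.2 (EReal.coe_ne_top _), by linarith⟩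
        · set pa := (b a).toReal with hpa
          set ps := (∑ j ∈ s', b j).toReal with hps
          have ea : b a = (pa : EReal) := (EReal.coe_toReal h1 hba).symm
          have es : (∑ j ∈ s', b j) = (ps : EReal) := (EReal.coe_toReal h2 hbs).symm
          have hlt : r < pa + ps := by
            rw [ea, es, ← EReal.coe_add, EReal.coe_lt_coe_iff] at hr
            exact hr
          refine ⟨pa - (pa + ps - r) / 2, ps - (pa + ps - r) / 2, ?_, ?_, by linarith⟩
          · rw [ea, EReal.coe_lt_coe_iff]; linarith
          · rw [es, EReal.coe_lt_coe_iff]; linarith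
    obtain ⟨c, hc1, hc2⟩ := ih (fun j hj => hb j (Finset.mem_insert_of_mem hj)) q hq
    refine ⟨Function.update c a p, ?_, ?_⟩
    · intro j hj
      rcases Finset.mem_insert.1 hj with rfl | hj'
      · simpa using hp
      · have hne : j ≠ a := fun h => hnot (by rwa [h] at hj')
        simpa [Function.update_of_ne hne] using hc1 j hj'
    · rw [Finset.sum_insert hnot, Function.update_self]
      have heq : ∑ j ∈ s', Function.update c a p j = ∑ j ∈ s', c j :=
        Finset.sum_congr rfl fun j hj => Function.update_of_ne (fun h => hnot (by rwa [h] at hj)) _ _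
      rw [heq]; linarith

private lemma lf_hconv_lower {n : ℕ} (hn : 0 < n) (L : Fin n → ℝ → EReal)
    (hbot : ∀ j, ∀ t : ℝ, 0 < t → L j t ≠ ⊥)
    (u : ℝ) (x : Fin n → ℝ) (hx : ∀ j, (u : EReal) < LF (L j) (x j)) :
    (u : EReal) < LF (hconv n L) (∑ j, x j) := by
  choose s hs hlt using fun j => lt_lf_iff.1 (hx j)
  have hne_top : ∀ j, L j (s j) ≠ ⊤ := by
    intro j h
    have h2 := hlt j
    rw [h, EReal.sub_top] at h2
    exact absurd h2 (by simp)
  set ℓ : Fin n → ℝ := fun j => (L j (s j)).toReal with hℓ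
  have hLs : ∀ j, L j (s j) = (ℓ j : EReal) := fun j =>
    (EReal.coe_toReal (hne_top j) (hbot j _ (hs j))).symm
  have hlt' : ∀ j, u < s j * x j - ℓ j := by
    intro j
    have h2 := hlt j
    rw [hLs j, ← EReal.coe_sub, EReal.coe_lt_coe_iff] at h2
    exact h2
  set T : ℝ := ∑ k, (s k)⁻¹ with hT
  have hTpos : 0 < T := Finset.sum_pos (fun k _ => inv_pos.2 (hs k))
    ⟨⟨0, hn⟩, Finset.mem_univ _⟩
  set t : ℝ := T⁻¹ with ht
  have htpos : 0 < t := inv_pos.2 hTpos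
  set α : Fin n → ℝ := fun j => t * (s j)⁻¹ with hα
  have hαpos : ∀ j, 0 < α j := fun j => mul_pos htpos (inv_pos.2 (hs j))
  have hαsum : ∑ j, α j = 1 := by
    rw [hα, ← Finset.mul_sum, ← hT, ht]
    exact inv_mul_cancel₀ hTpos.ne'
  have hdiv : ∀ j, t / α j = s j := by
    intro j
    rw [hα]
    field_simp
  have hαs : ∀ j, α j * s j = t := by
    intro j
    show t * (s j)⁻¹ * s j = t
    rw [mul_assoc, inv_mul_cancel₀ (hs j).ne', mul_one]
  have hconv_le : hconv n L t ≤ ((∑ j, α j * ℓ j : ℝ) : EReal) := by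
    have h3 : hconv n L t ≤ ∑ j, (α j : EReal) * L j (t / α j) :=
      iInf₂_le α ⟨hαpos, hαsum⟩
    refine h3.trans_eq ?_
    rw [ereal_coe_sum]
    refine Finset.sum_congr rfl fun j _ => ?_
    rw [hdiv j, hLs j, ← EReal.coe_mul]
  have hreal : u < t * (∑ j, x j) - ∑ j, α j * ℓ j := by
    have e1 : t * (∑ j, x j) - ∑ j, α j * ℓ j = ∑ j, α j * (s j * x j - ℓ j) := by
      rw [Finset.mul_sum, ← Finset.sum_sub_distrib]
      refine Finset.sum_congr rfl fun j _ => ?_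
      rw [← hαs j]; ring
    have e2 : ∑ j, α j * u < ∑ j, α j * (s j * x j - ℓ j) :=
      Finset.sum_lt_sum_of_nonempty ⟨⟨0, hn⟩, Finset.mem_univ _⟩
        (fun j _ => mul_lt_mul_of_pos_left (hlt' j) (hαpos j))
    have e3 : ∑ j, α j * u = u := by
      rw [← Finset.sum_mul, hαsum, one_mul]
    rw [e1, ← e3]
    exact e2
  have h4 : (u : EReal) < ((t * (∑ j, x j) - ∑ j, α j * ℓ j : ℝ) : EReal) :=
    EReal.coe_lt_coe_iff.2 hreal
  refine lt_of_lt_of_le h4 (le_trans ?_ (single_le_lf _ htpos _))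
  rw [EReal.coe_sub]
  exact EReal.sub_le_sub le_rfl hconv_le

private lemma lf_hconv_upper {n : ℕ} (L : Fin n → ℝ → EReal)
    (hbot : ∀ j, ∀ t : ℝ, 0 < t → L j t ≠ ⊥)
    (u x : ℝ) (hx : (u : EReal) < LF (hconv n L) x) :
    ∃ y : Fin n → ℝ, ∑ j, y j = x ∧ ∀ j, (u : EReal) < LF (L j) (y j) := by
  obtain ⟨t, ht, hlt⟩ := lt_lf_iff.1 hx
  have hne : hconv n L t ≠ ⊤ := by
    intro h
    rw [h, EReal.sub_top] at hlt
    exact absurd hlt (by simp)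
  have h1 : hconv n L t < ((t * x - u : ℝ) : EReal) := by
    have step1 : (u : EReal) + hconv n L t < ((t * x : ℝ) : EReal) :=
      (EReal.lt_sub_iff_add_lt (Or.inr (EReal.coe_ne_top u)) (Or.inl hne)).1 hlt
    rw [EReal.coe_sub]
    exact (EReal.lt_sub_iff_add_lt (Or.inl (EReal.coe_ne_bot u))
      (Or.inl (EReal.coe_ne_top u))).2 (by rwa [add_comm])
  obtain ⟨α, h2⟩ := iInf_lt_iff.1 h1
  obtain ⟨hP, hF⟩ := iInf_lt_iff.1 h2
  obtain ⟨hαpos, hαsum⟩ := hP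
  set s : Fin n → ℝ := fun j => t / α j with hsdef
  have hspos : ∀ j, 0 < s j := fun j => div_pos ht (hαpos j)
  have hfb : ∀ j ∈ Finset.univ, (α j : EReal) * L j (s j) ≠ ⊥ := by
    intro j _
    rcases eq_or_ne (L j (s j)) ⊤ with h | h
    · rw [h, EReal.coe_mul_top_of_pos (hαpos j)]
      simp
    · have hb := hbot j _ (hspos j)
      lift L j (s j) to ℝ using ⟨h, hb⟩ with w
      rw [← EReal.coe_mul]
      exact EReal.coe_ne_bot _
  have hne_top : ∀ j, L j (s j) ≠ ⊤ := by
    intro j h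
    have : ∑ k, (α k : EReal) * L k (s k) = ⊤ :=
      ereal_sum_eq_top hfb (Finset.mem_univ j)
        (by rw [h, EReal.coe_mul_top_of_pos (hαpos j)])
    rw [this] at hF
    exact absurd hF (by simp)
  set ℓ : Fin n → ℝ := fun j => (L j (s j)).toReal with hℓ
  have hLs : ∀ j, L j (s j) = (ℓ j : EReal) := fun j =>
    (EReal.coe_toReal (hne_top j) (hbot j _ (hspos j))).symm
  have hsum_real : ∑ j, α j * ℓ j < t * x - u := by
    have e1 : ∑ j, (α j : EReal) * L j (s j) = ((∑ j, α j * ℓ j : ℝ) : EReal) := by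
      rw [ereal_coe_sum]
      exact Finset.sum_congr rfl fun j _ => by rw [hLs j, ← EReal.coe_mul]
    rw [e1, EReal.coe_lt_coe_iff] at hF
    exact hF
  set A : ℝ := ∑ j, α j * ℓ j with hA
  set c₀ : ℝ := t * x - A with hc₀
  have hc₀u : u < c₀ := by rw [hc₀]; linarith
  set y : Fin n → ℝ := fun j => (c₀ + ℓ j) * (α j / t) with hy
  have hsy : ∀ j, s j * y j = c₀ + ℓ j := by
    intro j
    have e : t / α j * (α j / t) = 1 := by
      rw [div_mul_div_comm, mul_comm t (α j)]
      exact div_self (mul_pos (hαpos j) ht).ne'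
    calc s j * y j = (c₀ + ℓ j) * (t / α j * (α j / t)) := by rw [hy, hsdef]; ring
      _ = c₀ + ℓ j := by rw [e, mul_one]
  refine ⟨y, ?_, ?_⟩
  · have e2 : ∑ j, y j = (∑ j, (c₀ * α j + ℓ j * α j)) / t := by
      rw [Finset.sum_div]
      exact Finset.sum_congr rfl fun j _ => by rw [hy]; ring
    rw [e2, Finset.sum_add_distrib, ← Finset.mul_sum, hαsum]
    have e3 : ∑ j, ℓ j * α j = A := by
      rw [hA]
      exact Finset.sum_congr rfl fun j _ => by ring
    rw [e3, hc₀]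
    field_simp
    ring
  · intro j
    refine lt_of_lt_of_le ?_ (single_le_lf _ (hspos j) _)
    rw [hLs j, ← EReal.coe_sub, EReal.coe_lt_coe_iff, hsy j]
    linarith

private noncomputable def tg (L : ℝ → EReal) (v : ℝ) : EReal :=
  sInf ((fun x : ℝ => (x : EReal)) '' {x : ℝ | (v : EReal) < LF L x})

private lemma tg_mono (L : ℝ → EReal) {v w : ℝ} (h : v ≤ w) : tg L v ≤ tg L w := by
  refine sInf_le_sInf (Set.image_mono ?_)
  intro x hx
  exact lt_of_le_of_lt (EReal.coe_le_coe_iff.2 h) hx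

private lemma hconv_exists_fin {n : ℕ} (hn : 0 < n) (L : Fin n → ℝ → EReal)
    (hfin : ∀ j, ∃ t : ℝ, 0 < t ∧ L j t ≠ ⊤) :
    ∃ t : ℝ, 0 < t ∧ hconv n L t ≠ ⊤ := by
  choose w hw hwt using hfin
  set T : ℝ := ∑ k, (w k)⁻¹ with hT
  have hTpos : 0 < T := Finset.sum_pos (fun k _ => inv_pos.2 (hw k))
    ⟨⟨0, hn⟩, Finset.mem_univ _⟩
  set t : ℝ := T⁻¹ with ht
  have htpos : 0 < t := inv_pos.2 hTpos
  set α : Fin n → ℝ := fun j => t * (w j)⁻¹ with hα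
  have hαpos : ∀ j, 0 < α j := fun j => mul_pos htpos (inv_pos.2 (hw j))
  have hαsum : ∑ j, α j = 1 := by
    rw [hα, ← Finset.mul_sum, ← hT, ht]
    exact inv_mul_cancel₀ hTpos.ne'
  have hdiv : ∀ j, t / α j = w j := by
    intro j
    rw [hα]
    field_simp
  refine ⟨t, htpos, ?_⟩
  have hle : hconv n L t ≤ ∑ j, (α j : EReal) * L j (w j) := by
    have h3 := iInf₂_le (f := fun (α : Fin n → ℝ)
      (_ : (∀ j, 0 < α j) ∧ ∑ j, α j = 1) => ∑ j, (α j : EReal) * L j (t / α j))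
      α ⟨hαpos, hαsum⟩
    refine h3.trans_eq (Finset.sum_congr rfl fun j _ => by rw [hdiv j])
  have hsne : ∑ j, (α j : EReal) * L j (w j) ≠ ⊤ := by
    refine ereal_sum_ne_top fun j _ => ?_
    rcases eq_or_ne (L j (w j)) ⊥ with h | h
    · rw [h, EReal.coe_mul_bot_of_pos (hαpos j)]
      simp
    · lift L j (w j) to ℝ using ⟨hwt j, h⟩ with v
      rw [← EReal.coe_mul]
      exact EReal.coe_ne_top _
  exact ne_top_of_le_ne_top hsne hle

private lemma tg_hconv {n : ℕ} (hn : 0 < n) (L : Fin n → ℝ → EReal)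
    (hbot : ∀ j, ∀ t : ℝ, 0 < t → L j t ≠ ⊥)
    (hfin : ∀ j, ∃ t : ℝ, 0 < t ∧ L j t ≠ ⊤) (u : ℝ) :
    tg (hconv n L) u = ∑ j, tg (L j) u := by
  have hbnt : ∀ j ∈ Finset.univ, tg (L j) u ≠ ⊤ := by
    intro j _
    obtain ⟨x, hx⟩ := exists_lt_lf (L j) (hfin j) u
    exact ne_top_of_le_ne_top (EReal.coe_ne_top x) (sInf_le ⟨x, hx, rfl⟩)
  refine le_antisymm ?_ ?_
  · rw [← EReal.le_of_forall_lt_iff_le]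
    intro z hz
    obtain ⟨c, hc1, hc2⟩ := exists_gt_sum Finset.univ _ hbnt z hz
    have hyj : ∀ j, ∃ yj : ℝ, ((u : EReal) < LF (L j) yj) ∧ yj ≤ c j := by
      intro j
      have h4 := hc1 j (Finset.mem_univ j)
      rw [tg, sInf_lt_iff] at h4
      obtain ⟨e, ⟨y, hy, rfl⟩, hlt⟩ := h4
      exact ⟨y, hy, (EReal.coe_lt_coe_iff.1 hlt).le⟩
    choose y hy hyc using hyj
    have hmem : (u : EReal) < LF (hconv n L) (∑ j, y j) := lf_hconv_lower hn L hbot u y hy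
    refine le_trans (sInf_le ⟨_, hmem, rfl⟩) ?_
    rw [EReal.coe_le_coe_iff]
    exact le_trans (Finset.sum_le_sum fun j _ => hyc j) hc2
  · refine le_sInf ?_
    rintro e ⟨x, hx, rfl⟩
    obtain ⟨y, hsum, hy⟩ := lf_hconv_upper L hbot u x hx
    calc ∑ j, tg (L j) u ≤ ∑ j, ((y j : ℝ) : EReal) :=
          Finset.sum_le_sum fun j _ => sInf_le ⟨y j, hy j, rfl⟩
      _ = ((∑ j, y j : ℝ) : EReal) := (ereal_coe_sum _ _).symm
      _ = (x : EReal) := by rw [hsum]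

private lemma geInv_eq_iSup (L : ℝ → EReal) (u : ℝ) :
    geInv L u = ⨆ k : ℕ, tg L (u - 1 / (k + 1)) := by
  refine le_antisymm ?_ ?_
  · rw [← EReal.le_of_forall_lt_iff_le]
    intro z hz
    have hmem : (u : EReal) ≤ LF L z := by
      rw [← EReal.ge_of_forall_gt_iff_ge]
      intro v hv
      obtain ⟨k, hk⟩ := exists_nat_one_div_lt (sub_pos.2 (EReal.coe_lt_coe_iff.1 hv))
      have h1 : tg L (u - 1 / (k + 1)) < (z : EReal) :=
        lt_of_le_of_lt (le_iSup (fun k : ℕ => tg L (u - 1 / (k + 1))) k) hz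
      rw [tg, sInf_lt_iff] at h1
      obtain ⟨e, ⟨y, hy, rfl⟩, hyz⟩ := h1
      have h2 : ((u - 1 / (k + 1) : ℝ) : EReal) < LF L z :=
        lt_of_lt_of_le hy (lf_mono L (EReal.coe_lt_coe_iff.1 hyz).le)
      refine le_trans (EReal.coe_le_coe_iff.2 (by linarith)) h2.le
    exact sInf_le ⟨z, hmem, rfl⟩
  · refine iSup_le fun k => ?_
    refine sInf_le_sInf (Set.image_mono ?_)
    intro x hx
    refine lt_of_lt_of_le (EReal.coe_lt_coe_iff.2 ?_) hx
    have : (0 : ℝ) < 1 / (k + 1) := by positivity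
    linarith

private lemma ereal_iSup_sum {n : ℕ} (f : Fin n → ℕ → EReal) (hf : ∀ j, Monotone (f j)) :
    ⨆ k, ∑ j, f j k = ∑ j, ⨆ k, f j k := by
  refine le_antisymm (iSup_le fun k => Finset.sum_le_sum fun j _ => le_iSup (f j) k) ?_
  rw [← EReal.ge_of_forall_gt_iff_ge]
  intro z hz
  have hnb : ∀ j ∈ Finset.univ, (⨆ k, f j k) ≠ ⊥ := by
    intro j _ h
    rw [ereal_sum_eq_bot (Finset.mem_univ j) h] at hz
    exact not_lt_bot hz
  obtain ⟨c, hc1, hc2⟩ := exists_lt_sum Finset.univ _ hnb z hz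
  have hek : ∀ j, ∃ k, (c j : EReal) < f j k := fun j =>
    lt_iSup_iff.1 (hc1 j (Finset.mem_univ j))
  choose K hK using hek
  set k0 : ℕ := ∑ j, K j with hk0
  have hKk : ∀ j, (c j : EReal) ≤ f j k0 := fun j => (hK j).le.trans
    (hf j (Finset.single_le_sum (fun _ _ => Nat.zero_le _) (Finset.mem_univ j)))
  calc (z : EReal) ≤ ((∑ j, c j : ℝ) : EReal) := EReal.coe_le_coe_iff.2 hc2
    _ = ∑ j, ((c j : ℝ) : EReal) := ereal_coe_sum _ _
    _ ≤ ∑ j, f j k0 := Finset.sum_le_sum fun j _ => hKk j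
    _ ≤ ⨆ k, ∑ j, f j k := le_iSup (fun k => ∑ j, f j k) k0


end Aux

/-- Theorem 1. For functions `L_1,…,L_n : (0,∞) → (-∞,∞]`, each finite
somewhere, the generalized inverse of the Legendre–Fenchel transform of the Hölder
convolution is the sum of the generalized inverses. -/
theorem geInv_hconv_eq_sum (n : ℕ) (hn : 0 < n) (L : Fin n → ℝ → EReal)
    (hbot : ∀ j, ∀ t : ℝ, 0 < t → L j t ≠ ⊥)
    (hfin : ∀ j, ∃ t : ℝ, 0 < t ∧ L j t ≠ ⊤) :
    ∀ u : ℝ, geInv (hconv n L) u = ∑ j, geInv (L j) u := by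
  intro u
  have hmono : ∀ j : Fin n, Monotone fun k : ℕ => tg (L j) (u - 1 / (k + 1)) := by
    intro j k k' hk
    refine tg_mono (L j) ?_
    have h1 : (1 : ℝ) / (k' + 1) ≤ 1 / (k + 1) := by
      apply one_div_le_one_div_of_le
      · positivity
      · exact_mod_cast add_le_add_left (Nat.cast_le.2 hk) 1
    linarith
  calc geInv (hconv n L) u = ⨆ k : ℕ, tg (hconv n L) (u - 1 / (k + 1)) :=
        geInv_eq_iSup _ u
    _ = ⨆ k : ℕ, ∑ j, tg (L j) (u - 1 / (k + 1)) :=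
        iSup_congr fun k => tg_hconv hn L hbot hfin _
    _ = ∑ j, ⨆ k : ℕ, tg (L j) (u - 1 / (k + 1)) :=
        ereal_iSup_sum _ hmono
    _ = ∑ j, geInv (L j) u := Finset.sum_congr rfl fun j _ => (geInv_eq_iSup (L j) u).symm
end

section
/- Let n be a natural number and let L_1,…,L_n be functions from (0,∞) to (−∞,∞] such that for each j there exists t > 0 with L_j(t) < ∞. Then for any real numbers x_1,…,x_n, min(L_1^*(x_1),…,L_n^*(x_n)) ≤ (L_1 ⊞ ⋯ ⊞ L_n)^*(x_1 + ⋯ + x_n) ≤ max(L_1^*(x_1),…,L_n^*(x_n)). -/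
open Set MeasureTheory Filter

private lemma er_sum_ne_bot {ι : Type*} (s : Finset ι) (f : ι → EReal)
    (h : ∀ i ∈ s, f i ≠ ⊥) : ∑ i ∈ s, f i ≠ ⊥ := by
  induction s using Finset.cons_induction with
  | empty => simp
  | cons a s ha ih =>
    rw [Finset.sum_cons, Ne, EReal.add_eq_bot_iff]
    push_neg
    exact ⟨h a (Finset.mem_cons_self a s), ih fun i hi => h i (Finset.mem_cons_of_mem hi)⟩

private lemma er_sum_eq_top {ι : Type*} [DecidableEq ι] (s : Finset ι) (f : ι → EReal)
    (h : ∀ i ∈ s, f i ≠ ⊥) {k : ι} (hk : k ∈ s) (ht : f k = ⊤) : ∑ i ∈ s, f i = ⊤ := by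
  rw [← Finset.add_sum_erase s f hk, ht,
    EReal.top_add_of_ne_bot (er_sum_ne_bot _ _ fun i hi => h i (Finset.mem_of_mem_erase hi))]

private lemma er_coe_sum {ι : Type*} (s : Finset ι) (f : ι → ℝ) :
    ((∑ i ∈ s, f i : ℝ) : EReal) = ∑ i ∈ s, (f i : EReal) := by
  induction s using Finset.cons_induction with
  | empty => simp
  | cons a s ha ih => rw [Finset.sum_cons, Finset.sum_cons, EReal.coe_add, ih]

private lemma er_pos_mul_ne_bot {a : ℝ} (ha : 0 < a) {z : EReal} (hz : z ≠ ⊥) :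
    (a : EReal) * z ≠ ⊥ := by
  induction z with
  | bot => exact absurd rfl hz
  | coe z => rw [← EReal.coe_mul]; exact EReal.coe_ne_bot _
  | top => rw [EReal.coe_mul_top_of_pos ha]; simp

/-- Proposition on `L^*`. For any reals `x_1,…,x_n`,
`min_j L_j^*(x_j) ≤ (L_1 ⊞ ⋯ ⊞ L_n)^*(x_1+⋯+x_n) ≤ max_j L_j^*(x_j)`. -/
theorem LF_hconv_between_min_max (n : ℕ) (hn : 0 < n) (L : Fin n → ℝ → EReal)
    (hbot : ∀ j, ∀ t : ℝ, 0 < t → L j t ≠ ⊥)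
    (hfin : ∀ j, ∃ t : ℝ, 0 < t ∧ L j t ≠ ⊤)
    (x : Fin n → ℝ) :
    (⨅ j, LF (L j) (x j)) ≤ LF (hconv n L) (∑ j, x j) ∧
      LF (hconv n L) (∑ j, x j) ≤ ⨆ j, LF (L j) (x j) := by
  have : NeZero n := ⟨hn.ne'⟩
  set s : ℝ := ∑ j, x j with hs
  constructor
  · -- lower bound
    rw [← EReal.ge_of_forall_gt_iff_ge]
    intro c hc
    have h1 : ∀ j, ∃ u : ℝ, 0 < u ∧ ∃ l : ℝ, L j u = (l : EReal) ∧ c < u * x j - l := by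
      intro j
      have hcj : (c : EReal) < LF (L j) (x j) := lt_of_lt_of_le hc (iInf_le _ j)
      rw [LF, lt_iSup_iff] at hcj
      obtain ⟨u, hcj⟩ := hcj
      rw [lt_iSup_iff] at hcj
      obtain ⟨hu0, hcj⟩ := hcj
      have hnt : L j u ≠ ⊤ := by
        intro h
        rw [h, EReal.sub_top] at hcj
        exact absurd hcj (by simp)
      refine ⟨u, hu0, (L j u).toReal, (EReal.coe_toReal hnt (hbot j u hu0)).symm, ?_⟩
      rw [← EReal.coe_toReal hnt (hbot j u hu0), ← EReal.coe_sub, EReal.coe_lt_coe_iff] at hcj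
      exact hcj
    choose u hu l hl hcl using h1
    have huz : ∀ j, u j ≠ 0 := fun j => (hu j).ne'
    set T : ℝ := ∑ j, (u j)⁻¹ with hT
    have hT0 : 0 < T :=
      Finset.sum_pos (fun j _ => inv_pos.2 (hu j)) Finset.univ_nonempty
    set t : ℝ := T⁻¹ with htdef
    have ht0 : 0 < t := inv_pos.2 hT0
    set α : Fin n → ℝ := fun j => t / u j with hα
    have hα0 : ∀ j, 0 < α j := fun j => div_pos ht0 (hu j)
    have hαsum : ∑ j, α j = 1 := by
      simp only [hα, div_eq_mul_inv, ← Finset.mul_sum, ← hT, htdef]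
      exact inv_mul_cancel₀ hT0.ne'
    have hdiv : ∀ j, t / α j = u j := fun j => by
      show t / (t / u j) = u j
      field_simp [huz j, ht0.ne']
    have h2 : hconv n L t ≤ ((∑ j, α j * l j : ℝ) : EReal) := by
      have h3 := iInf₂_le (f := fun (α : Fin n → ℝ)
          (_ : (∀ j, 0 < α j) ∧ ∑ j, α j = 1) => ∑ j, (α j : EReal) * L j (t / α j))
        α ⟨hα0, hαsum⟩
      refine le_trans h3 (le_of_eq ?_)
      rw [er_coe_sum]
      exact Finset.sum_congr rfl fun j _ => by rw [hdiv j, hl j, ← EReal.coe_mul]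
    have hreal : c ≤ t * s - ∑ j, α j * l j := by
      have e1 : ∑ j, α j * c ≤ ∑ j, α j * (u j * x j - l j) :=
        Finset.sum_le_sum fun j _ => mul_le_mul_of_nonneg_left (hcl j).le (hα0 j).le
      have e2 : ∑ j, α j * c = c := by rw [← Finset.sum_mul, hαsum, one_mul]
      have e3 : ∑ j, α j * (u j * x j - l j) = t * s - ∑ j, α j * l j := by
        simp only [mul_sub, Finset.sum_sub_distrib]
        congr 1
        rw [hs, Finset.mul_sum]
        exact Finset.sum_congr rfl fun j _ => by
          rw [hα]; field_simp [huz j]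
      rw [← e2]; rw [e3] at e1; exact e1
    have key : (c : EReal) ≤ ((t * s : ℝ) : EReal) - hconv n L t := by
      calc (c : EReal) ≤ ((t * s - ∑ j, α j * l j : ℝ) : EReal) := EReal.coe_le_coe_iff.2 hreal
        _ = ((t * s : ℝ) : EReal) - ((∑ j, α j * l j : ℝ) : EReal) := EReal.coe_sub _ _
        _ ≤ _ := EReal.sub_le_sub le_rfl h2
    exact key.trans (le_iSup₂ (f := fun (t : ℝ) (_ : 0 < t) =>
      ((t * s : ℝ) : EReal) - hconv n L t) t ht0)
  · -- upper bound
    rw [← EReal.ge_of_forall_gt_iff_ge]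
    intro c hc
    rw [LF, lt_iSup_iff] at hc
    obtain ⟨t, hc⟩ := hc
    rw [lt_iSup_iff] at hc
    obtain ⟨ht0, hc⟩ := hc
    have h3 : hconv n L t < ((t * s - c : ℝ) : EReal) := by
      have h4 : (c : EReal) + hconv n L t < ((t * s : ℝ) : EReal) :=
        (EReal.lt_sub_iff_add_lt (Or.inr (EReal.coe_ne_top c))
          (Or.inr (EReal.coe_ne_bot c))).1 hc
      rw [EReal.coe_sub]
      exact (EReal.lt_sub_iff_add_lt (Or.inl (EReal.coe_ne_bot c))
        (Or.inl (EReal.coe_ne_top c))).2 (by rwa [add_comm])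
    rw [hconv, iInf_lt_iff] at h3
    obtain ⟨α, h3⟩ := h3
    rw [iInf_lt_iff] at h3
    obtain ⟨⟨hα0, hαsum⟩, h3⟩ := h3
    have hterm_ne_bot : ∀ j ∈ Finset.univ, (α j : EReal) * L j (t / α j) ≠ ⊥ :=
      fun j _ => er_pos_mul_ne_bot (hα0 j) (hbot j _ (div_pos ht0 (hα0 j)))
    have hnetop : ∀ j, L j (t / α j) ≠ ⊤ := by
      intro k hk
      have := er_sum_eq_top Finset.univ _ hterm_ne_bot (Finset.mem_univ k)
        (by rw [hk, EReal.mul_top_of_pos (by exact_mod_cast hα0 k)])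
      rw [this] at h3
      exact not_top_lt h3
    have hl : ∀ j, L j (t / α j) = ((L j (t / α j)).toReal : EReal) :=
      fun j => (EReal.coe_toReal (hnetop j) (hbot j _ (div_pos ht0 (hα0 j)))).symm
    set l : Fin n → ℝ := fun j => (L j (t / α j)).toReal with hldef
    have hsum_eq : ∑ j, (α j : EReal) * L j (t / α j) = ((∑ j, α j * l j : ℝ) : EReal) := by
      rw [er_coe_sum]
      exact Finset.sum_congr rfl fun j _ => by rw [hl j, ← EReal.coe_mul]
    rw [hsum_eq, EReal.coe_lt_coe_iff] at h3
    -- real: ∑ α_j l_j < t*s - c, so c < ∑ α_j ((t/α_j) x_j - l_j)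
    have hmain : ∑ j, α j * c < ∑ j, α j * ((t / α j) * x j - l j) := by
      have e2 : ∑ j, α j * c = c := by rw [← Finset.sum_mul, hαsum, one_mul]
      have e3 : ∑ j, α j * ((t / α j) * x j - l j) = t * s - ∑ j, α j * l j := by
        simp only [mul_sub, Finset.sum_sub_distrib]
        congr 1
        rw [hs, Finset.mul_sum]
        exact Finset.sum_congr rfl fun j _ => by
          field_simp [(hα0 j).ne']
      rw [e2, e3]
      linarith
    obtain ⟨k, -, hk⟩ := Finset.exists_lt_of_sum_lt hmain
    have hck : c < (t / α k) * x k - l k := lt_of_mul_lt_mul_left hk (hα0 k).le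
    have hle : (c : EReal) ≤ LF (L k) (x k) := by
      have hv : ((((t / α k) * x k : ℝ)) : EReal) - L k (t / α k)
          = (((t / α k) * x k - l k : ℝ) : EReal) := by
        rw [hl k, ← EReal.coe_sub]
      have := le_iSup₂ (f := fun (v : ℝ) (_ : 0 < v) =>
        ((v * x k : ℝ) : EReal) - L k v) (t / α k) (div_pos ht0 (hα0 k))
      refine le_trans ?_ this
      rw [hv]
      exact_mod_cast hck.le
    exact hle.trans (le_iSup (fun j => LF (L j) (x j)) k)
end

section
/- Let L : (0,∞) → [−∞,∞] be a function with L(t) < ∞ for some t > 0. Then for every u ∈ ℝ, the largest generalized inverse of the Legendre–Fenchel transform of L satisfies L^{*⇐}(u) = inf_{t>0} (u + L(t))/t, where the infimum is taken in [−∞,∞]. -/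
open Set MeasureTheory Filter

lemma key (t x u : ℝ) (ht : 0 < t) (l : EReal) :
    (u : EReal) < ((t * x : ℝ) : EReal) - l ↔ ((u : EReal) + l) / (t : EReal) < (x : EReal) := by
  induction l using EReal.rec with
  | bot =>
    simp only [EReal.coe_sub_bot, EReal.add_bot]
    rw [EReal.bot_div_of_pos_ne_top (by exact_mod_cast ht) (by simp)]
    simp [EReal.bot_lt_coe, EReal.coe_lt_top]
  | top =>
    simp only [EReal.sub_top, EReal.coe_add_top]
    rw [EReal.top_div_of_pos_ne_top (by exact_mod_cast ht) (by simp)]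
    simp
  | coe l =>
    rw [← EReal.coe_sub, ← EReal.coe_add, ← EReal.coe_div, EReal.coe_lt_coe_iff,
      EReal.coe_lt_coe_iff, div_lt_iff₀ ht]
    constructor <;> intro h <;> nlinarith

lemma sInf_image_lt (I : EReal) :
    sInf ((fun x : ℝ => (x : EReal)) '' {x : ℝ | I < (x : EReal)}) = I := by
  apply le_antisymm
  · by_contra h
    push_neg at h
    obtain ⟨y, hy1, hy2⟩ := EReal.exists_between_coe_real h
    have hm : ((y : ℝ) : EReal) ∈ (fun x : ℝ => (x : EReal)) '' {x : ℝ | I < (x : EReal)} :=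
      ⟨y, hy1, rfl⟩
    exact absurd (sInf_le hm) (not_le.2 hy2)
  · exact le_sInf (by rintro _ ⟨x, hx, rfl⟩; exact (le_of_lt hx))

/-- explicit formula for the largest generalized inverse.
`L^{*⇐}(u) = inf_{t>0} (u + L(t))/t`. -/
theorem tgeInv_eq_iInf (L : ℝ → EReal)
    (hfin : ∃ t : ℝ, 0 < t ∧ L t ≠ ⊤) (u : ℝ) :
    tgeInv L u = ⨅ (t : ℝ) (_ : 0 < t), ((u : EReal) + L t) / (t : EReal) := by
  have hset : {x : ℝ | (u : EReal) < LF L x}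
      = {x : ℝ | (⨅ (t : ℝ) (_ : 0 < t), ((u : EReal) + L t) / (t : EReal)) < (x : EReal)} := by
    ext x
    simp only [Set.mem_setOf_eq, LF, lt_iSup_iff, iInf_lt_iff]
    exact exists_congr fun t => exists_congr fun ht => key t x u ht (L t)
  rw [tgeInv, hset, sInf_image_lt]
end

section
/- For all real r ≥ 1 and a, b ≥ 0, the power functions p_{r,a}(t) := (a·t)^r on (0,∞) satisfy the additivity property p_{r,a} ⊞ p_{r,b} = p_{r,a+b}, i.e., for every t > 0, inf{ α·(a·t/α)^r + (1−α)·(b·t/(1−α))^r : 0 < α < 1 } = ((a+b)·t)^r. -/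
open Filter Set Topology

/-- additivity of the Hölder convolution on power functions.
For real `r ≥ 1`, `a, b ≥ 0` and `t > 0`,
`inf { α (a t/α)^r + (1-α) (b t/(1-α))^r : 0 < α < 1 } = ((a+b) t)^r`, i.e.
`p_{r,a} ⊞ p_{r,b} = p_{r,a+b}`. -/
theorem hconv_rpow (r a b : ℝ) (hr : 1 ≤ r) (ha : 0 ≤ a) (hb : 0 ≤ b) (t : ℝ) (ht : 0 < t) :
    sInf {y : ℝ | ∃ α : ℝ, 0 < α ∧ α < 1 ∧
        y = α * (a * t / α) ^ r + (1 - α) * (b * t / (1 - α)) ^ r} =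
      ((a + b) * t) ^ r := by
  have hr0 : r ≠ 0 := by linarith
  have hr0' : (0:ℝ) ≤ r := by linarith
  set S := {y : ℝ | ∃ α : ℝ, 0 < α ∧ α < 1 ∧
      y = α * (a * t / α) ^ r + (1 - α) * (b * t / (1 - α)) ^ r} with hSdef
  have key : ∀ α : ℝ, 0 < α → α < 1 →
      ((a + b) * t) ^ r ≤ α * (a * t / α) ^ r + (1 - α) * (b * t / (1 - α)) ^ r := by
    intro α h0 h1
    have h1' : 0 < 1 - α := by linarith
    have hx : a * t / α ∈ Ici (0:ℝ) := by simp only [mem_Ici]; positivity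
    have hy : b * t / (1 - α) ∈ Ici (0:ℝ) := by simp only [mem_Ici]; positivity
    have hconv := (convexOn_rpow hr).2 hx hy h0.le h1'.le (by ring)
    simp only [smul_eq_mul] at hconv
    have hcomb : α * (a * t / α) + (1 - α) * (b * t / (1 - α)) = (a + b) * t := by
      field_simp
    rwa [hcomb] at hconv
  have hbdd : BddBelow S := ⟨((a + b) * t) ^ r, by
    rintro y ⟨α, h0, h1, rfl⟩
    exact key α h0 h1⟩
  have hne : S.Nonempty := ⟨_, ⟨1/2, by norm_num, by norm_num, rfl⟩⟩
  refine le_antisymm ?_ (le_csInf hne ?_)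
  · rcases eq_or_lt_of_le ha with ha0 | ha'
    · -- a = 0 : take the limit α → 0⁺
      have hlim : Tendsto (fun α : ℝ => α * (a * t / α) ^ r +
          (1 - α) * (b * t / (1 - α)) ^ r) (𝓝[>] (0:ℝ)) (𝓝 (((a + b) * t) ^ r)) := by
        simp only [← ha0, zero_mul, zero_div, Real.zero_rpow hr0, mul_zero, zero_add]
        have hc : ContinuousAt (fun α : ℝ => (1 - α) * (b * t / (1 - α)) ^ r) 0 := by
          apply ContinuousAt.mul
          · fun_prop
          · exact (Real.continuousAt_rpow_const _ _ (Or.inr hr0')).comp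
              (by fun_prop (disch := norm_num))
        have := hc.tendsto.mono_left (nhdsWithin_le_nhds (s := Ioi (0:ℝ)))
        simpa using this
      refine ge_of_tendsto hlim ?_
      have h1 : ∀ᶠ α : ℝ in 𝓝[>] (0:ℝ), α < 1 :=
        eventually_nhdsWithin_of_eventually_nhds (eventually_lt_nhds (by norm_num))
      filter_upwards [h1, self_mem_nhdsWithin] with α hα1 hα0
      exact csInf_le hbdd ⟨α, hα0, hα1, rfl⟩
    · rcases eq_or_lt_of_le hb with hb0 | hb'
      · -- b = 0 : take the limit α → 1⁻
        have hlim : Tendsto (fun α : ℝ => α * (a * t / α) ^ r +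
            (1 - α) * (b * t / (1 - α)) ^ r) (𝓝[<] (1:ℝ)) (𝓝 (((a + b) * t) ^ r)) := by
          simp only [← hb0, zero_mul, zero_div, Real.zero_rpow hr0, mul_zero, add_zero]
          have hc : ContinuousAt (fun α : ℝ => α * (a * t / α) ^ r) 1 := by
            apply ContinuousAt.mul
            · fun_prop
            · exact (Real.continuousAt_rpow_const _ _ (Or.inr hr0')).comp
                (by fun_prop (disch := norm_num))
          have := hc.tendsto.mono_left (nhdsWithin_le_nhds (s := Iio (1:ℝ)))
          simpa using this
        refine ge_of_tendsto hlim ?_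
        have h1 : ∀ᶠ α : ℝ in 𝓝[<] (1:ℝ), 0 < α :=
          eventually_nhdsWithin_of_eventually_nhds (eventually_gt_nhds (by norm_num))
        filter_upwards [h1, self_mem_nhdsWithin] with α hα0 hα1
        exact csInf_le hbdd ⟨α, hα0, hα1, rfl⟩
      · -- a > 0, b > 0 : the infimum is attained at α = a / (a + b)
        have hab : 0 < a + b := by linarith
        refine csInf_le hbdd ⟨a / (a + b), by positivity, ?_, ?_⟩
        · rw [div_lt_one hab]; linarith
        · have h1 : a * t / (a / (a + b)) = (a + b) * t := by
            field_simp
          have h2 : (1 : ℝ) - a / (a + b) = b / (a + b) := by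
            field_simp; ring
          have h3 : b * t / (b / (a + b)) = (a + b) * t := by
            field_simp
          rw [h1, h2, h3, ← add_mul]
          field_simp
  · rintro y ⟨α, h0, h1, rfl⟩
    exact key α h0 h1
end

section
/- Let L : (0,∞) → [−∞,∞] be convex on (0,∞), real-valued and strictly convex on an interval (t_0, t_1) with 0 < t_0 < t_1 < ∞. Let L'(t) denote the right derivative of L at t ∈ (t_0,t_1), L'(t_0+) := lim_{t ↓ t_0} L'(t), and L'(t_1−) := lim_{t ↑ t_1} L'(t−). Then the interval (L'(t_0+), L'(t_1−)) is nonempty, it is contained in dom(L^*) := {x ∈ ℝ : L^*(x) < ∞}, and the Legendre–Fenchel transform L^* is strictly increasing on the entire interval (L'(t_0+), ∞) ∩ dom(L^*). -/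
open Set MeasureTheory Filter

lemma aux_div_le (a b c : ℝ) (X : EReal) (hb : 0 < b)
    (h : (c : EReal) ≤ (a : EReal) + (b : EReal) * X) :
    (((c - a) / b : ℝ) : EReal) ≤ X := by
  induction X using EReal.rec with
  | bot =>
    rw [EReal.coe_mul_bot_of_pos hb, EReal.add_bot] at h
    exact absurd (le_bot_iff.mp h) (EReal.coe_ne_bot c)
  | coe r =>
    rw [← EReal.coe_mul, ← EReal.coe_add, EReal.coe_le_coe_iff] at h
    rw [EReal.coe_le_coe_iff, div_le_iff₀ hb]
    linarith
  | top => exact le_top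

/-- Proposition str. Let `L` be convex on `(0,∞)` and real-valued
(given by `ℓ`) and strictly convex on `(t_0,t_1)` with `0 < t_0 < t_1 < ∞`. Let `D t` be
the right derivative of `ℓ` at `t ∈ (t_0,t_1)`, and let `d_0 = L'(t_0+)`,
`d_1 = L'(t_1-)` be its one-sided limits (in `[-∞,∞]`). Then the interval `(d_0, d_1)` is
nonempty, it is contained in `dom L^*`, and `L^*` is strictly increasing on the entire
set `(d_0, ∞) ∩ dom L^*`. -/
theorem LF_strictMono_of_strictConvex (L : ℝ → EReal) (ℓ : ℝ → ℝ) (t0 t1 : ℝ)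
    (ht0 : 0 < t0) (ht01 : t0 < t1)
    (hconvex : ∀ x ∈ Ioi (0 : ℝ), ∀ y ∈ Ioi (0 : ℝ), ∀ a b : ℝ, 0 ≤ a → 0 ≤ b →
      a + b = 1 → L (a * x + b * y) ≤ (a : EReal) * L x + (b : EReal) * L y)
    (hreal : ∀ t ∈ Ioo t0 t1, L t = ((ℓ t : ℝ) : EReal))
    (hstrict : ∀ x ∈ Ioo t0 t1, ∀ y ∈ Ioo t0 t1, x ≠ y → ∀ a b : ℝ, 0 < a → 0 < b →
      a + b = 1 → L (a * x + b * y) < (a : EReal) * L x + (b : EReal) * L y)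
    (D : ℝ → ℝ) (hD : ∀ t ∈ Ioo t0 t1, HasDerivWithinAt ℓ (D t) (Ioi t) t)
    (d0 d1 : EReal)
    (hd0 : Tendsto (fun t => (D t : EReal)) (nhdsWithin t0 (Ioi t0)) (nhds d0))
    (hd1 : Tendsto (fun t => (D t : EReal)) (nhdsWithin t1 (Iio t1)) (nhds d1)) :
    (∃ x : ℝ, d0 < (x : EReal) ∧ (x : EReal) < d1) ∧
      (∀ x : ℝ, d0 < (x : EReal) → (x : EReal) < d1 → LF L x < ⊤) ∧
      (∀ x y : ℝ, d0 < (x : EReal) → x < y → LF L x < ⊤ → LF L y < ⊤ →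
        LF L x < LF L y) := by
  -- Real convexity of ℓ on (t0,t1), in multiplied-out "chord" form.
  have chord2 : ∀ p ∈ Ioo t0 t1, ∀ q ∈ Ioo t0 t1, ∀ r ∈ Ioo t0 t1, p < q → q < r →
      (r - p) * ℓ q ≤ (r - q) * ℓ p + (q - p) * ℓ r := by
    intro p hp q hq r hr hpq hqr
    have hrp : (0:ℝ) < r - p := by linarith
    set a : ℝ := (r - q) / (r - p) with ha_def
    set b : ℝ := (q - p) / (r - p) with hb_def
    have ha : 0 ≤ a := div_nonneg (by linarith) (by linarith)
    have hb : 0 ≤ b := div_nonneg (by linarith) (by linarith)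
    have hab : a + b = 1 := by rw [ha_def, hb_def]; field_simp; ring
    have hcomb : a * p + b * r = q := by rw [ha_def, hb_def]; field_simp; ring
    have h := hconvex p (lt_trans ht0 hp.1) r (lt_trans ht0 hr.1) a b ha hb hab
    rw [hcomb, hreal q hq, hreal p hp, hreal r hr, ← EReal.coe_mul, ← EReal.coe_mul,
      ← EReal.coe_add, EReal.coe_le_coe_iff] at h
    have h2 : (r - p) * (a * ℓ p + b * ℓ r) = (r - q) * ℓ p + (q - p) * ℓ r := by
      rw [ha_def, hb_def]; field_simp
    nlinarith [mul_le_mul_of_nonneg_left h (le_of_lt hrp)]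
  -- Strict midpoint convexity.
  have midstrict : ∀ p ∈ Ioo t0 t1, ∀ r ∈ Ioo t0 t1, p < r →
      2 * ℓ ((p + r) / 2) < ℓ p + ℓ r := by
    intro p hp r hr hpr
    have h := hstrict p hp r hr (ne_of_lt hpr) (1/2) (1/2) (by norm_num) (by norm_num)
      (by norm_num)
    have hcomb : (1/2 : ℝ) * p + (1/2 : ℝ) * r = (p + r) / 2 := by ring
    have hmid : (p + r) / 2 ∈ Ioo t0 t1 := by
      constructor <;> [linarith [hp.1, hr.1]; linarith [hp.2, hr.2]]
    rw [hcomb, hreal _ hmid, hreal p hp, hreal r hr] at h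
    have h12 : ((1/2 : ℝ) : EReal) * ((ℓ p : ℝ) : EReal) + ((1/2 : ℝ) : EReal) * ((ℓ r : ℝ) : EReal)
        = (((1/2 : ℝ) * ℓ p + (1/2 : ℝ) * ℓ r : ℝ) : EReal) := by
      rw [← EReal.coe_mul, ← EReal.coe_mul, ← EReal.coe_add]
    rw [h12, EReal.coe_lt_coe_iff] at h
    linarith
  -- S1 : right derivative is below forward slopes.
  have S1 : ∀ s ∈ Ioo t0 t1, ∀ u ∈ Ioo t0 t1, s < u → D s ≤ (ℓ u - ℓ s) / (u - s) := by
    intro s hs u hu hsu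
    have hder := (hasDerivWithinAt_iff_tendsto_slope' (notMem_Ioi.mpr le_rfl)).mp (hD s hs)
    refine le_of_tendsto hder ?_
    filter_upwards [Ioo_mem_nhdsGT_of_mem (show s ∈ Ico s u from ⟨le_rfl, hsu⟩)] with w hw
    rw [slope_def_field]
    have hw' : w ∈ Ioo t0 t1 := ⟨lt_trans hs.1 hw.1, lt_trans hw.2 hu.2⟩
    have hc := chord2 s hs w hw' u hu hw.1 hw.2
    rw [div_le_div_iff₀ (by linarith [hw.1] : (0:ℝ) < w - s) (by linarith : (0:ℝ) < u - s)]
    nlinarith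
  -- S2 : backward slopes are below the right derivative.
  have S2 : ∀ u ∈ Ioo t0 t1, ∀ s ∈ Ioo t0 t1, u < s → (ℓ s - ℓ u) / (s - u) ≤ D s := by
    intro u hu s hs hus
    have hder := (hasDerivWithinAt_iff_tendsto_slope' (notMem_Ioi.mpr le_rfl)).mp (hD s hs)
    refine ge_of_tendsto hder ?_
    filter_upwards [Ioo_mem_nhdsGT_of_mem (show s ∈ Ico s t1 from ⟨le_rfl, hs.2⟩)] with w hw
    rw [slope_def_field]
    have hw' : w ∈ Ioo t0 t1 := ⟨lt_trans hs.1 hw.1, hw.2⟩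
    have hc := chord2 u hu s hs w hw' hus hw.1
    rw [div_le_div_iff₀ (by linarith : (0:ℝ) < s - u) (by linarith [hw.1] : (0:ℝ) < w - s)]
    nlinarith
  -- Real supporting line within the interval.
  have supp_real : ∀ s ∈ Ioo t0 t1, ∀ u ∈ Ioo t0 t1, ℓ s + D s * (u - s) ≤ ℓ u := by
    intro s hs u hu
    rcases lt_trichotomy s u with h | h | h
    · have h1 := S1 s hs u hu h
      have := mul_le_mul_of_nonneg_right h1 (by linarith : (0:ℝ) ≤ u - s)
      rw [div_mul_cancel₀ _ (by linarith : (u - s) ≠ 0)] at this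
      linarith
    · subst h; simp
    · have h1 := S2 u hu s hs h
      have := mul_le_mul_of_nonneg_right h1 (by linarith : (0:ℝ) ≤ s - u)
      rw [div_mul_cancel₀ _ (by linarith : (s - u) ≠ 0)] at this
      nlinarith
  -- Global supporting line: for all t > 0, L t ≥ ℓ s + D s (t - s).
  have support : ∀ s ∈ Ioo t0 t1, ∀ t : ℝ, 0 < t →
      ((ℓ s + D s * (t - s) : ℝ) : EReal) ≤ L t := by
    intro s hs t ht
    rcases lt_trichotomy s t with hst | hst | hst
    · -- pick u ∈ (s, min t t1)
      obtain ⟨u, hu⟩ : (Ioo s (min t t1)).Nonempty :=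
        nonempty_Ioo.mpr (lt_min hst hs.2)
      have hut : u < t := lt_of_lt_of_le hu.2 (min_le_left _ _)
      have hu' : u ∈ Ioo t0 t1 := ⟨lt_trans hs.1 hu.1, lt_of_lt_of_le hu.2 (min_le_right _ _)⟩
      have hts : (0:ℝ) < t - s := by linarith
      set a : ℝ := (t - u) / (t - s) with ha_def
      set b : ℝ := (u - s) / (t - s) with hb_def
      have hbpos : 0 < b := by
        rw [hb_def]; apply div_pos (by linarith [hu.1]) hts
      have h := hconvex s (lt_trans ht0 hs.1) t ht a b
        (div_nonneg (by linarith) (le_of_lt hts)) (le_of_lt hbpos)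
        (by rw [ha_def, hb_def]; field_simp; ring)
      have hcomb : a * s + b * t = u := by rw [ha_def, hb_def]; field_simp; ring
      rw [hcomb, hreal u hu', hreal s hs, ← EReal.coe_mul] at h
      have key := aux_div_le (a * ℓ s) b (ℓ u) (L t) hbpos h
      refine le_trans ?_ key
      rw [EReal.coe_le_coe_iff, le_div_iff₀ hbpos]
      have hsupp := supp_real s hs u hu'
      have hb1 : b * (t - s) = u - s := by rw [hb_def]; field_simp
      have hab1 : a + b = 1 := by rw [ha_def, hb_def]; field_simp <;> ring
      have e2 : (ℓ s + D s * (t - s)) * b = b * ℓ s + D s * (u - s) := by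
        rw [← hb1]; ring
      have ha' : a = 1 - b := by linarith
      have e3 : ℓ u - a * ℓ s = ℓ u - ℓ s + b * ℓ s := by rw [ha']; ring
      linarith [e2, e3, hsupp]
    · subst hst
      rw [hreal s hs, EReal.coe_le_coe_iff]; simp
    · -- t < s : pick u ∈ (max t t0, s)
      obtain ⟨u, hu⟩ : (Ioo (max t t0) s).Nonempty :=
        nonempty_Ioo.mpr (max_lt hst hs.1)
      have htu : t < u := lt_of_le_of_lt (le_max_left _ _) hu.1
      have hu' : u ∈ Ioo t0 t1 := ⟨lt_of_le_of_lt (le_max_right _ _) hu.1, lt_trans hu.2 hs.2⟩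
      have hst' : (0:ℝ) < s - t := by linarith
      set a : ℝ := (s - u) / (s - t) with ha_def
      set b : ℝ := (u - t) / (s - t) with hb_def
      have hapos : 0 < a := by
        rw [ha_def]; apply div_pos (by linarith [hu.2]) hst'
      have h := hconvex t ht s (lt_trans ht0 hs.1) a b (le_of_lt hapos)
        (div_nonneg (by linarith) (le_of_lt hst'))
        (by rw [ha_def, hb_def]; field_simp <;> ring)
      have hcomb : a * t + b * s = u := by rw [ha_def, hb_def]; field_simp; ring
      rw [hcomb, hreal u hu', hreal s hs, ← EReal.coe_mul, add_comm] at h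
      have key := aux_div_le (b * ℓ s) a (ℓ u) (L t) hapos h
      refine le_trans ?_ key
      rw [EReal.coe_le_coe_iff, le_div_iff₀ hapos]
      have hsupp := supp_real s hs u hu'
      have ha1 : a * (t - s) = u - s := by
        rw [ha_def]; field_simp <;> ring
      have hab1 : a + b = 1 := by rw [ha_def, hb_def]; field_simp <;> ring
      have e2 : (ℓ s + D s * (t - s)) * a = a * ℓ s + D s * (u - s) := by
        rw [← ha1]; ring
      have hb' : b = 1 - a := by linarith
      have e3 : ℓ u - b * ℓ s = ℓ u - ℓ s + a * ℓ s := by rw [hb']; ring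
      linarith [e2, e3, hsupp]
  -- weak monotonicity of D
  have Dle : ∀ a ∈ Ioo t0 t1, ∀ b ∈ Ioo t0 t1, a < b → D a ≤ D b := by
    intro a ha b hb hab
    exact le_trans (S1 a ha b hb hab) (S2 a ha b hb hab)
  -- strict monotonicity of D
  have Dmono : ∀ a ∈ Ioo t0 t1, ∀ b ∈ Ioo t0 t1, a < b → D a < D b := by
    intro a ha b hb hab
    set m : ℝ := (a + b) / 2 with hm_def
    have hm : m ∈ Ioo t0 t1 := by
      constructor <;> [simp only [hm_def]; simp only [hm_def]] <;>
        [linarith [ha.1, hb.1]; linarith [ha.2, hb.2]]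
    have ham : a < m := by rw [hm_def]; linarith
    have hmb : m < b := by rw [hm_def]; linarith
    have h1 := S1 a ha m hm ham
    have h2 := S2 m hm b hb hmb
    have h3 := midstrict a ha b hb hab
    have key : (ℓ m - ℓ a) / (m - a) < (ℓ b - ℓ m) / (b - m) := by
      rw [div_lt_div_iff₀ (by linarith : (0:ℝ) < m - a) (by linarith : (0:ℝ) < b - m)]
      have hma : m - a = (b - a) / 2 := by rw [hm_def]; ring
      have hbm : b - m = (b - a) / 2 := by rw [hm_def]; ring
      rw [hma, hbm]
      have hm2 : ℓ m = ℓ ((a + b) / 2) := by rw [hm_def]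
      nlinarith [hm2]
    calc D a ≤ (ℓ m - ℓ a) / (m - a) := h1
      _ < (ℓ b - ℓ m) / (b - m) := key
      _ ≤ D b := h2
  -- d0 ≤ D a for a in the interval
  have hd0le : ∀ a ∈ Ioo t0 t1, d0 ≤ (D a : EReal) := by
    intro a ha
    refine le_of_tendsto hd0 ?_
    filter_upwards [Ioo_mem_nhdsGT_of_mem (show t0 ∈ Ico t0 a from ⟨le_rfl, ha.1⟩)] with t ht
    exact EReal.coe_le_coe_iff.mpr
      (Dle t ⟨ht.1, lt_trans ht.2 ha.2⟩ a ha ht.2)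
  -- D b ≤ d1 for b in the interval
  have hled1 : ∀ b ∈ Ioo t0 t1, (D b : EReal) ≤ d1 := by
    intro b hb
    refine ge_of_tendsto hd1 ?_
    filter_upwards [Ioo_mem_nhdsLT_of_mem (show t1 ∈ Ioc b t1 from ⟨hb.2, le_rfl⟩)] with t ht
    exact EReal.coe_le_coe_iff.mpr
      (Dle b hb t ⟨lt_trans hb.1 ht.1, ht.2⟩ ht.1)
  -- existence of points with x < D s (from x < d1)
  have exists_s_gt : ∀ x : ℝ, (x : EReal) < d1 → ∃ s ∈ Ioo t0 t1, x < D s := by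
    intro x hx
    have h1 : ∀ᶠ t in nhdsWithin t1 (Iio t1), (x : EReal) < (D t : EReal) :=
      hd1.eventually (eventually_gt_nhds hx)
    have h2 : ∀ᶠ t in nhdsWithin t1 (Iio t1), t ∈ Ioo t0 t1 :=
      Ioo_mem_nhdsLT_of_mem (show t1 ∈ Ioc t0 t1 from ⟨ht01, le_rfl⟩)
    obtain ⟨s, hs1, hs2⟩ := (h1.and h2).exists
    exact ⟨s, hs2, EReal.coe_lt_coe_iff.mp hs1⟩
  -- existence of points with D s < x (from d0 < x)
  have exists_s_lt : ∀ x : ℝ, d0 < (x : EReal) → ∃ s ∈ Ioo t0 t1, D s < x := by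
    intro x hx
    have h1 : ∀ᶠ t in nhdsWithin t0 (Ioi t0), (D t : EReal) < (x : EReal) :=
      hd0.eventually (eventually_lt_nhds hx)
    have h2 : ∀ᶠ t in nhdsWithin t0 (Ioi t0), t ∈ Ioo t0 t1 :=
      Ioo_mem_nhdsGT_of_mem (show t0 ∈ Ico t0 t1 from ⟨le_rfl, ht01⟩)
    obtain ⟨s, hs1, hs2⟩ := (h1.and h2).exists
    exact ⟨s, hs2, EReal.coe_lt_coe_iff.mp hs1⟩
  -- upper bound on LF L x given a point s with x < D s
  have key2 : ∀ (x : ℝ) (s : ℝ), s ∈ Ioo t0 t1 → x < D s →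
      LF L x ≤ ((D s * s - ℓ s : ℝ) : EReal) := by
    intro x s hs hxs
    refine iSup₂_le fun t ht => ?_
    rcases eq_top_or_lt_top (L t) with hLt | hLt
    · rw [hLt, EReal.sub_top]; exact bot_le
    · have hlow := support s hs t ht
      have hbot : L t ≠ ⊥ := fun h => by
        rw [h] at hlow; exact absurd (le_bot_iff.mp hlow) (EReal.coe_ne_bot _)
      set r : ℝ := (L t).toReal with hr_def
      have hLr : L t = (r : EReal) := (EReal.coe_toReal hLt.ne hbot).symm
      rw [hLr, EReal.coe_le_coe_iff] at hlow
      rw [hLr, ← EReal.coe_sub, EReal.coe_le_coe_iff]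
      nlinarith
  refine ⟨?_, ?_, ?_⟩
  · -- nonempty interval
    set a : ℝ := t0 + (t1 - t0) / 4 with ha_def
    set m : ℝ := t0 + (t1 - t0) / 2 with hm_def
    set b : ℝ := t0 + 3 * (t1 - t0) / 4 with hb_def
    have ha : a ∈ Ioo t0 t1 := ⟨by rw [ha_def]; linarith, by rw [ha_def]; linarith⟩
    have hm : m ∈ Ioo t0 t1 := ⟨by rw [hm_def]; linarith, by rw [hm_def]; linarith⟩
    have hb : b ∈ Ioo t0 t1 := ⟨by rw [hb_def]; linarith, by rw [hb_def]; linarith⟩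
    refine ⟨D m, ?_, ?_⟩
    · exact lt_of_le_of_lt (hd0le a ha)
        (EReal.coe_lt_coe_iff.mpr (Dmono a ha m hm (by rw [ha_def, hm_def]; linarith)))
    · exact lt_of_lt_of_le
        (EReal.coe_lt_coe_iff.mpr (Dmono m hm b hb (by rw [hm_def, hb_def]; linarith)))
        (hled1 b hb)
  · -- finiteness on (d0, d1)
    intro x _ hx1
    obtain ⟨s, hs, hxs⟩ := exists_s_gt x hx1
    exact lt_of_le_of_lt (key2 x s hs hxs) (EReal.coe_lt_top _)
  · -- strict monotonicity
    intro x y hx hxy hfx hfy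
    obtain ⟨s, hs, hsx⟩ := exists_s_lt x hx
    have hspos : 0 < s := lt_trans ht0 hs.1
    -- lower bound for LF L y
    have hylow : ((s * y - ℓ s : ℝ) : EReal) ≤ LF L y := by
      refine le_iSup₂_of_le s hspos ?_
      rw [hreal s hs, ← EReal.coe_sub]
    have hybot : LF L y ≠ ⊥ := fun h => by
      rw [h] at hylow; exact absurd (le_bot_iff.mp hylow) (EReal.coe_ne_bot _)
    set My : ℝ := (LF L y).toReal with hMy_def
    have hMy : LF L y = (My : EReal) := (EReal.coe_toReal hfy.ne hybot).symm
    have hMylow : s * y - ℓ s ≤ My := by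
      rw [hMy, EReal.coe_le_coe_iff] at hylow; exact hylow
    set c : ℝ := s * (y - x) with hc_def
    have hcpos : 0 < c := by rw [hc_def]; exact mul_pos hspos (by linarith)
    have hxup : LF L x ≤ ((My - c : ℝ) : EReal) := by
      refine iSup₂_le fun t ht => ?_
      rcases eq_top_or_lt_top (L t) with hLt | hLt
      · rw [hLt, EReal.sub_top]; exact bot_le
      · have hlow := support s hs t ht
        have hbot : L t ≠ ⊥ := fun h => by
          rw [h] at hlow; exact absurd (le_bot_iff.mp hlow) (EReal.coe_ne_bot _)
        set r : ℝ := (L t).toReal with hr_def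
        have hLr : L t = (r : EReal) := (EReal.coe_toReal hLt.ne hbot).symm
        rw [hLr, EReal.coe_le_coe_iff] at hlow
        rw [hLr, ← EReal.coe_sub, EReal.coe_le_coe_iff]
        -- t*y - r ≤ My
        have hty : t * y - r ≤ My := by
          have := le_iSup₂_of_le (f := fun (t : ℝ) (_ : 0 < t) => ((t * y : ℝ) : EReal) - L t)
            t ht (le_refl (((t * y : ℝ) : EReal) - L t))
          rw [hLr, ← EReal.coe_sub] at this
          have h2 : (((t * y - r : ℝ)) : EReal) ≤ (My : EReal) := by
            rw [← hMy]; exact this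
          exact EReal.coe_le_coe_iff.mp h2
        rcases le_total t s with hts | hst
        · -- t ≤ s : use support line
          have h1 : t * (x - D s) ≤ s * (x - D s) :=
            mul_le_mul_of_nonneg_right hts (by linarith)
          rw [hc_def]; nlinarith
        · -- s ≤ t
          have h1 : s * (y - x) ≤ t * (y - x) :=
            mul_le_mul_of_nonneg_right hst (by linarith)
          rw [hc_def]; nlinarith
    calc LF L x ≤ ((My - c : ℝ) : EReal) := hxup
      _ < (My : EReal) := EReal.coe_lt_coe_iff.mpr (by linarith)
      _ = LF L y := hMy.symm
end

section
/- Let X_1,…,X_n be real-valued random variables on a common probability space (not assumed independent) such that for each j there exists t > 0 with E e^{tX_j} < ∞. Then for every t > 0, the Cramér–Chernoff function of the sum satisfies L_{X_1+⋯+X_n}(t) ≤ (L_{X_1} ⊞ ⋯ ⊞ L_{X_n})(t). -/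
open Set MeasureTheory Filter

lemma ofReal_prod_aux {ι : Type*} (s : Finset ι) (f : ι → ℝ) (hf : ∀ j ∈ s, 0 ≤ f j) :
    ENNReal.ofReal (∏ j ∈ s, f j) = ∏ j ∈ s, ENNReal.ofReal (f j) := by
  induction s using Finset.cons_induction with
  | empty => simp
  | cons a s ha ih =>
    rw [Finset.prod_cons, Finset.prod_cons, ENNReal.ofReal_mul (hf a (Finset.mem_cons_self a s)),
      ih fun j hj => hf j (Finset.mem_cons_of_mem hj)]

lemma log_prod_aux {ι : Type*} (s : Finset ι) (f : ι → ENNReal) :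
    ENNReal.log (∏ j ∈ s, f j) = ∑ j ∈ s, ENNReal.log (f j) := by
  induction s using Finset.cons_induction with
  | empty => simp
  | cons a s ha ih => rw [Finset.prod_cons, Finset.sum_cons, ENNReal.log_mul_add, ih]

/-- Hölder's inequality for Cramér–Chernoff functions. For random
variables `X_1,…,X_n` (not assumed independent), `L_{X_1+⋯+X_n} ≤ L_{X_1} ⊞ ⋯ ⊞ L_{X_n}`
on `(0,∞)`. -/
theorem cramer_sum_le_hconv (Ω : Type*) [MeasurableSpace Ω] (μ : Measure Ω)
    [IsProbabilityMeasure μ] (n : ℕ) (hn : 0 < n) (X : Fin n → Ω → ℝ)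
    (hX : ∀ j, Measurable (X j))
    (hfin : ∀ j, ∃ t : ℝ, 0 < t ∧ ∫⁻ ω, ENNReal.ofReal (Real.exp (t * X j ω)) ∂μ ≠ ⊤) :
    ∀ t : ℝ, 0 < t →
      cramer μ (fun ω => ∑ j, X j ω) t ≤ hconv n (fun j => cramer μ (X j)) t := by
  intro t ht
  rw [hconv]
  refine le_iInf fun α => le_iInf fun ⟨hα, hsum⟩ => ?_
  simp only [cramer]
  have key : ∫⁻ ω, ENNReal.ofReal (Real.exp (t * ∑ j, X j ω)) ∂μ ≤
      ∏ j, (∫⁻ ω, ENNReal.ofReal (Real.exp ((t / α j) * X j ω)) ∂μ) ^ (α j) := by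
    have := ENNReal.lintegral_prod_norm_pow_le (μ := μ) Finset.univ
      (f := fun j ω => ENNReal.ofReal (Real.exp ((t / α j) * X j ω)))
      (fun j _ => ((hX j).const_mul _).exp.ennreal_ofReal.aemeasurable)
      (p := α) hsum (fun j _ => (hα j).le)
    refine le_trans (le_of_eq ?_) this
    refine lintegral_congr fun ω => ?_
    have h1 : ∀ j : Fin n, ENNReal.ofReal (Real.exp (t / α j * X j ω)) ^ α j
        = ENNReal.ofReal (Real.exp (t * X j ω)) := fun j => by
      rw [ENNReal.ofReal_rpow_of_pos (Real.exp_pos _), ← Real.exp_mul]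
      congr 2
      field_simp [(hα j).ne']
    simp only [h1]
    rw [Finset.mul_sum, Real.exp_sum, ofReal_prod_aux]
    exact fun j _ => (Real.exp_pos _).le
  calc ENNReal.log (∫⁻ ω, ENNReal.ofReal (Real.exp (t * ∑ j, X j ω)) ∂μ)
      ≤ ENNReal.log (∏ j, (∫⁻ ω, ENNReal.ofReal (Real.exp ((t / α j) * X j ω)) ∂μ) ^ (α j)) :=
        ENNReal.log_monotone key
    _ = ∑ j, (α j : EReal) * ENNReal.log (∫⁻ ω, ENNReal.ofReal (Real.exp ((t / α j) * X j ω)) ∂μ) := by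
        rw [log_prod_aux]
        exact Finset.sum_congr rfl fun j _ => ENNReal.log_rpow
end

section
/- Let X_1,…,X_n be real-valued random variables on a common probability space (not assumed independent) such that for each j there exists t > 0 with E e^{tX_j} < ∞. Then for every u ∈ ℝ, (L_{X_1+⋯+X_n})^{*←}(u) ≤ L_{X_1}^{*←}(u) + ⋯ + L_{X_n}^{*←}(u) (the sum being well defined in [−∞,∞] since each summand is < ∞). -/
open Set MeasureTheory Filter

lemma cramer_ne_bot {Ω : Type*} [MeasurableSpace Ω] (μ : Measure Ω) [IsProbabilityMeasure μ]
    {X : Ω → ℝ} (hX : Measurable X) (t : ℝ) : cramer μ X t ≠ ⊥ := by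
  rw [cramer, Ne, ENNReal.log_eq_bot_iff]
  intro h
  rw [lintegral_eq_zero_iff (by fun_prop)] at h
  have h2 : μ {a | 0 < Real.exp (t * X a)} = 0 := by
    simpa [Filter.EventuallyEq, ae_iff, ENNReal.ofReal_eq_zero, not_le] using h
  have h3 : {a | 0 < Real.exp (t * X a)} = Set.univ := by
    ext ω; simp [Real.exp_pos]
  rw [h3, measure_univ] at h2
  simp at h2

lemma lintegral_eq_of_cramer {Ω : Type*} [MeasurableSpace Ω] {μ : Measure Ω}
    {X : Ω → ℝ} {t r : ℝ} (h : cramer μ X t = (r : EReal)) :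
    ∫⁻ ω, ENNReal.ofReal (Real.exp (t * X ω)) ∂μ = ENNReal.ofReal (Real.exp r) := by
  set I := ∫⁻ ω, ENNReal.ofReal (Real.exp (t * X ω)) ∂μ with hI
  have h0 : I ≠ 0 := by
    intro h0; rw [cramer, ← hI, h0, ENNReal.log_zero] at h; exact (EReal.coe_ne_bot r) h.symm
  have htop : I ≠ ⊤ := by
    intro h0; rw [cramer, ← hI, h0, ENNReal.log_top] at h; exact (EReal.coe_ne_top r) h.symm
  rw [cramer, ← hI, ENNReal.log_pos_real h0 htop] at h
  have hr : Real.log I.toReal = r := by exact_mod_cast h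
  have hpos : 0 < I.toReal := ENNReal.toReal_pos h0 htop
  rw [← hr, Real.exp_log hpos, ENNReal.ofReal_toReal htop]

lemma holder_key {Ω : Type*} [MeasurableSpace Ω] (μ : Measure Ω) (n : ℕ)
    (X : Fin n → Ω → ℝ) (hX : ∀ j, Measurable (X j)) {t : ℝ} {α : Fin n → ℝ}
    (hα : ∀ j, 0 < α j) (hsum : ∑ j, α j = 1) :
    ∫⁻ ω, ENNReal.ofReal (Real.exp (t * ∑ j, X j ω)) ∂μ ≤
      ∏ j, (∫⁻ ω, ENNReal.ofReal (Real.exp ((t / α j) * X j ω)) ∂μ) ^ (α j) := by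
  have key : ∀ ω, ENNReal.ofReal (Real.exp (t * ∑ j, X j ω)) =
      ∏ j, (ENNReal.ofReal (Real.exp ((t / α j) * X j ω))) ^ (α j) := by
    intro ω
    have : ∀ j : Fin n, (ENNReal.ofReal (Real.exp ((t / α j) * X j ω))) ^ (α j)
        = ENNReal.ofReal (Real.exp (t * X j ω)) := by
      intro j
      rw [ENNReal.ofReal_rpow_of_pos (Real.exp_pos _), ← Real.exp_mul]
      congr 1
      field_simp
      rw [mul_assoc, mul_left_comm t (α j), mul_div_cancel_left₀ _ (hα j).ne']
    rw [Finset.prod_congr rfl (fun j _ => this j), ← ENNReal.ofReal_prod_of_nonneg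
      (fun j _ => (Real.exp_pos _).le), ← Real.exp_sum, Finset.mul_sum]
  simp_rw [key]
  exact ENNReal.lintegral_prod_norm_pow_le _ (fun j _ => (by fun_prop : Measurable _).aemeasurable)
    hsum (fun j _ => (hα j).le)

lemma LF_sum_ge {Ω : Type*} [MeasurableSpace Ω] (μ : Measure Ω) [IsProbabilityMeasure μ]
    (n : ℕ) (hn : 0 < n) (X : Fin n → Ω → ℝ) (hX : ∀ j, Measurable (X j)) (u : ℝ)
    (x : Fin n → ℝ) (hx : ∀ j, (u : EReal) ≤ LF (cramer μ (X j)) (x j)) :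
    (u : EReal) ≤ LF (cramer μ (fun ω => ∑ j, X j ω)) (∑ j, x j) := by
  rw [← EReal.ge_of_forall_gt_iff_ge]
  intro z hz
  have hpick : ∀ j, ∃ s : ℝ, 0 < s ∧ (z : EReal) < ((s * x j : ℝ) : EReal) - cramer μ (X j) s := by
    intro j
    have h1 := lt_of_lt_of_le hz (hx j)
    rw [LF, lt_iSup_iff] at h1
    obtain ⟨s, hs⟩ := h1
    rw [lt_iSup_iff] at hs
    obtain ⟨hs0, h⟩ := hs
    exact ⟨s, hs0, h⟩
  choose s hs0 hslt using hpick
  have hne_top : ∀ j, cramer μ (X j) (s j) ≠ ⊤ := by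
    intro j h
    have := hslt j
    rw [h, EReal.sub_top] at this
    exact absurd this (by simp)
  have hne_bot : ∀ j, cramer μ (X j) (s j) ≠ ⊥ := fun j => cramer_ne_bot μ (hX j) _
  set r : Fin n → ℝ := fun j => (cramer μ (X j) (s j)).toReal with hrdef
  have hcr : ∀ j, cramer μ (X j) (s j) = (r j : EReal) :=
    fun j => (EReal.coe_toReal (hne_top j) (hne_bot j)).symm
  have hzr : ∀ j, z < s j * x j - r j := by
    intro j
    have h1 := hslt j
    rw [hcr j, ← EReal.coe_sub, EReal.coe_lt_coe_iff] at h1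
    exact h1
  set A : ℝ := ∑ k, (s k)⁻¹ with hA
  have hApos : 0 < A :=
    Finset.sum_pos (fun k _ => inv_pos.2 (hs0 k))
      (Finset.univ_nonempty_iff.2 (Fin.pos_iff_nonempty.mp hn))
  set t : ℝ := A⁻¹ with ht
  have htpos : 0 < t := inv_pos.2 hApos
  set α : Fin n → ℝ := fun j => (s j)⁻¹ / A with hαdef
  have hαpos : ∀ j, 0 < α j := fun j => div_pos (inv_pos.2 (hs0 j)) hApos
  have hαsum : ∑ j, α j = 1 := by
    rw [hαdef]; rw [← Finset.sum_div, ← hA, div_self hApos.ne']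
  have htα : ∀ j, t / α j = s j := by
    intro j
    rw [hαdef, ht]
    field_simp
  have hαs : ∀ j, α j * s j = t := by
    intro j
    rw [hαdef, ht, div_mul_eq_mul_div, inv_mul_cancel₀ (hs0 j).ne', one_div]
  have hIj : ∀ j, ∫⁻ ω, ENNReal.ofReal (Real.exp ((t / α j) * X j ω)) ∂μ ≤
      ENNReal.ofReal (Real.exp (s j * x j - z)) := by
    intro j
    rw [htα j, lintegral_eq_of_cramer (hcr j)]
    exact ENNReal.ofReal_le_ofReal (Real.exp_le_exp.2 (by linarith [hzr j]))
  have hprod : ∏ j, (ENNReal.ofReal (Real.exp (s j * x j - z))) ^ (α j) =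
      ENNReal.ofReal (Real.exp (t * ∑ j, x j - z)) := by
    have h1 : ∀ j : Fin n, (ENNReal.ofReal (Real.exp (s j * x j - z))) ^ (α j)
        = ENNReal.ofReal (Real.exp (α j * (s j * x j - z))) := fun j => by
      rw [ENNReal.ofReal_rpow_of_pos (Real.exp_pos _), ← Real.exp_mul, mul_comm]
    rw [Finset.prod_congr rfl (fun j _ => h1 j), ← ENNReal.ofReal_prod_of_nonneg
      (fun j _ => (Real.exp_pos _).le), ← Real.exp_sum]
    congr 1
    have h2 : ∀ j : Fin n, α j * (s j * x j - z) = t * x j - α j * z := fun j => by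
      rw [mul_sub, ← mul_assoc, hαs j]
    rw [Finset.sum_congr rfl (fun j _ => h2 j), Finset.sum_sub_distrib, ← Finset.mul_sum,
      ← Finset.sum_mul, hαsum, one_mul]
  have hHolder := holder_key μ n X hX hαpos hαsum (t := t)
  have hle : ∫⁻ ω, ENNReal.ofReal (Real.exp (t * ∑ j, X j ω)) ∂μ ≤
      ENNReal.ofReal (Real.exp (t * ∑ j, x j - z)) := by
    refine hHolder.trans ?_
    rw [← hprod]
    exact Finset.prod_le_prod' (fun j _ => ENNReal.rpow_le_rpow (hIj j) (hαpos j).le)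
  have hcram : cramer μ (fun ω => ∑ j, X j ω) t ≤ ((t * ∑ j, x j - z : ℝ) : EReal) := by
    rw [cramer]
    calc ENNReal.log (∫⁻ ω, ENNReal.ofReal (Real.exp (t * ∑ j, X j ω)) ∂μ)
        ≤ ENNReal.log (ENNReal.ofReal (Real.exp (t * ∑ j, x j - z))) :=
          ENNReal.log_monotone hle
      _ = ((t * ∑ j, x j - z : ℝ) : EReal) := by
          rw [ENNReal.log_ofReal_of_pos (Real.exp_pos _), Real.log_exp]
  calc (z : EReal) = ((t * ∑ j, x j : ℝ) : EReal) - ((t * ∑ j, x j - z : ℝ) : EReal) := by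
        rw [← EReal.coe_sub]; norm_num
    _ ≤ ((t * ∑ j, x j : ℝ) : EReal) - cramer μ (fun ω => ∑ j, X j ω) t :=
        EReal.sub_le_sub le_rfl hcram
    _ ≤ LF (cramer μ (fun ω => ∑ j, X j ω)) (∑ j, x j) := le_iSup₂_of_le t htpos le_rfl

lemma ereal_le_sum_of_forall (n : ℕ) (hn : 0 < n) (A : EReal) (b : Fin n → EReal)
    (hb : ∀ j, b j ≠ ⊤)
    (h : ∀ y : Fin n → ℝ, (∀ j, b j < (y j : EReal)) → A ≤ ((∑ j, y j : ℝ) : EReal)) :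
    A ≤ ∑ j, b j := by
  rw [← EReal.le_of_forall_lt_iff_le]
  intro c hc
  by_cases hbot : ∀ j, b j ≠ ⊥
  · -- all real
    have hco : ∀ j, b j = ((b j).toReal : EReal) := fun j => (EReal.coe_toReal (hb j) (hbot j)).symm
    have hsum : ∑ j, b j = ((∑ j, (b j).toReal : ℝ) : EReal) :=
      calc ∑ j, b j = ∑ j, ((b j).toReal : EReal) := Finset.sum_congr rfl (fun j _ => hco j)
      _ = ((∑ j, (b j).toReal : ℝ) : EReal) :=
        (map_sum (⟨⟨Real.toEReal, EReal.coe_zero⟩, EReal.coe_add⟩ : ℝ →+ EReal) _ _).symm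
    rw [hsum, EReal.coe_lt_coe_iff] at hc
    set s : ℝ := ∑ j, (b j).toReal
    set δ : ℝ := (c - s) / n
    have hδ : 0 < δ := div_pos (by linarith) (by exact_mod_cast hn)
    have h1 : A ≤ ((∑ j, ((b j).toReal + δ) : ℝ) : EReal) := by
      refine h _ (fun j => ?_)
      rw [hco j, EReal.coe_lt_coe_iff]
      simp only [EReal.toReal_coe]
      linarith
    have h2 : ∑ j, ((b j).toReal + δ) = c := by
      rw [Finset.sum_add_distrib, Finset.sum_const, Finset.card_univ, Fintype.card_fin,
        nsmul_eq_mul]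
      have hn' : (n : ℝ) ≠ 0 := by exact_mod_cast hn.ne'
      simp only [s, δ]
      rw [mul_div_assoc', mul_div_cancel_left₀ _ hn']
      ring
    rwa [h2] at h1
  · push_neg at hbot
    obtain ⟨k, hk⟩ := hbot
    set r : Fin n → ℝ := fun j => if h : b j = ⊥ then 0 else (b j).toReal + 1 with hrdef
    have hr : ∀ j, b j < (r j : EReal) := by
      intro j
      by_cases h : b j = ⊥
      · simp [hrdef, h]
      · rw [hrdef]; simp only [h, dif_neg, not_false_iff]
        calc b j = ((b j).toReal : EReal) := (EReal.coe_toReal (hb j) h).symm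
        _ < (((b j).toReal + 1 : ℝ) : EReal) := by rw [EReal.coe_lt_coe_iff]; linarith
    set y : Fin n → ℝ := Function.update r k (c - (∑ j ∈ Finset.univ \ {k}, r j)) with hydef
    have hy : ∀ j, b j < (y j : EReal) := by
      intro j
      by_cases h : j = k
      · subst h; rw [hydef]; simp only [Function.update_self]; rw [hk]; exact bot_lt_iff_ne_bot.2 (EReal.coe_ne_bot _)
      · rw [hydef, Function.update_of_ne h]; exact hr j
    have hsy : ∑ j, y j = c := by
      rw [hydef, Finset.sum_update_of_mem (Finset.mem_univ k)]
      ring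
    have := h y hy
    rwa [hsy] at this


lemma exists_LF_ge {Ω : Type*} [MeasurableSpace Ω] (μ : MeasureTheory.Measure Ω)
    [MeasureTheory.IsProbabilityMeasure μ] {X : Ω → ℝ} (hX : Measurable X) (u : ℝ)
    (hfin : ∃ t : ℝ, 0 < t ∧ ∫⁻ ω, ENNReal.ofReal (Real.exp (t * X ω)) ∂μ ≠ ⊤) :
    ∃ x : ℝ, (u : EReal) ≤ LF (cramer μ X) x := by
  obtain ⟨t0, ht0, hne⟩ := hfin
  have hnt : cramer μ X t0 ≠ ⊤ := by rw [cramer, Ne, ENNReal.log_eq_top_iff]; exact hne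
  have hnb := cramer_ne_bot μ hX t0
  set r := (cramer μ X t0).toReal with hrd
  have hcr : cramer μ X t0 = (r : EReal) := (EReal.coe_toReal hnt hnb).symm
  refine ⟨(u + r) / t0, ?_⟩
  have ht : t0 * ((u + r) / t0) = u + r := by field_simp
  calc (u : EReal) = ((t0 * ((u + r) / t0) : ℝ) : EReal) - (r : EReal) := by
        rw [ht, ← EReal.coe_sub]; norm_num
    _ = ((t0 * ((u + r) / t0) : ℝ) : EReal) - cramer μ X t0 := by rw [hcr]
    _ ≤ LF (cramer μ X) ((u + r) / t0) := le_iSup₂_of_le t0 ht0 le_rfl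

/-- For random variables `X_1,…,X_n` (not assumed independent),
`(L_{X_1+⋯+X_n})^{*←}(u) ≤ L_{X_1}^{*←}(u) + ⋯ + L_{X_n}^{*←}(u)` for all real `u`. -/
theorem geInv_cramer_sum_le (Ω : Type*) [MeasurableSpace Ω] (μ : Measure Ω)
    [IsProbabilityMeasure μ] (n : ℕ) (hn : 0 < n) (X : Fin n → Ω → ℝ)
    (hX : ∀ j, Measurable (X j))
    (hfin : ∀ j, ∃ t : ℝ, 0 < t ∧ ∫⁻ ω, ENNReal.ofReal (Real.exp (t * X j ω)) ∂μ ≠ ⊤) :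
    ∀ u : ℝ, geInv (cramer μ (fun ω => ∑ j, X j ω)) u ≤
      ∑ j, geInv (cramer μ (X j)) u := by
  intro u
  have hb_lt : ∀ j, geInv (cramer μ (X j)) u ≠ ⊤ := by
    intro j
    obtain ⟨x, hx⟩ := exists_LF_ge μ (hX j) u (hfin j)
    have h1 : geInv (cramer μ (X j)) u ≤ (x : EReal) := sInf_le ⟨x, hx, rfl⟩
    exact (h1.trans_lt (EReal.coe_lt_top x)).ne
  apply ereal_le_sum_of_forall n hn _ _ hb_lt
  intro y hy
  have hex : ∀ j, ∃ xj : ℝ, (u : EReal) ≤ LF (cramer μ (X j)) xj ∧ xj ≤ y j := by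
    intro j
    have h1 := hy j
    rw [geInv, sInf_lt_iff] at h1
    obtain ⟨a, ha, halt⟩ := h1
    obtain ⟨xj, hxj, rfl⟩ := ha
    exact ⟨xj, hxj, (EReal.coe_lt_coe_iff.1 halt).le⟩
  choose x hx1 hx2 using hex
  have hmem := LF_sum_ge μ n hn X hX u x hx1
  have h1 : geInv (cramer μ (fun ω => ∑ j, X j ω)) u ≤ ((∑ j, x j : ℝ) : EReal) :=
    sInf_le ⟨∑ j, x j, hmem, rfl⟩
  exact h1.trans (EReal.coe_le_coe_iff.2 (Finset.sum_le_sum (fun j _ => hx2 j)))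
end

section
/- Let X be a real-valued random variable with E e^{tX} < ∞ for some t > 0, and take any u ∈ ℝ. Then the inequality P(X ≥ L_X^{*←}(u)) ≤ e^{−u} fails to hold if and only if all three of the following conditions take place: (i) x_max := sup supp(X) < ∞; (ii) p_max := P(X = x_max) > 0; and (iii) u > −ln p_max. -/
open Set MeasureTheory Filter
open scoped ENNReal

namespace ChernoffAux

lemma ereal_eq_top_of_forall_coe_le {a : EReal} (h : ∀ b : ℝ, (b : EReal) ≤ a) : a = ⊤ := by
  by_contra hne
  rcases EReal.exists_between_coe_real (Ne.lt_top hne) with ⟨y, hy, -⟩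
  exact absurd (h y) (not_le.2 hy)

lemma ereal_shuffle {a c : EReal} (b : ℝ) (h : (b : EReal) + a ≤ c) :
    (b : EReal) - c ≤ -a := by
  induction a using EReal.rec with
  | bot => simp
  | top =>
      have hc : c = ⊤ := top_le_iff.1 (by rw [EReal.coe_add_top] at h; exact h)
      simp [hc]
  | coe a' =>
      induction c using EReal.rec with
      | bot =>
          rw [← EReal.coe_add] at h
          exact absurd (le_bot_iff.1 h) (EReal.coe_ne_bot _)
      | top => simp
      | coe c' =>
          rw [← EReal.coe_add, EReal.coe_le_coe_iff] at h
          rw [← EReal.coe_sub, ← EReal.coe_neg, EReal.coe_le_coe_iff]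
          linarith

lemma LF_mono (L : ℝ → EReal) {x y : ℝ} (h : x ≤ y) : LF L x ≤ LF L y := by
  refine iSup₂_mono fun t ht => ?_
  exact EReal.sub_le_sub (EReal.coe_le_coe_iff.2 (by nlinarith)) le_rfl

lemma sInf_image_Ioi (m : ℝ) :
    sInf ((fun x : ℝ => (x : EReal)) '' Ioi m) = (m : EReal) := by
  refine le_antisymm (EReal.le_of_forall_lt_iff_le.1 fun z hz => ?_) ?_
  · exact sInf_le ⟨z, EReal.coe_lt_coe_iff.1 hz, rfl⟩
  · refine le_sInf ?_
    rintro b ⟨x, hx, rfl⟩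
    exact EReal.coe_le_coe_iff.2 (le_of_lt hx)

lemma bot_lt_coe_sub {c : EReal} (hc : c ≠ ⊤) (b : ℝ) : (⊥ : EReal) < (b : EReal) - c := by
  induction c using EReal.rec with
  | bot => simp [EReal.coe_sub_bot]
  | top => exact absurd rfl hc
  | coe c' => rw [← EReal.coe_sub]; exact EReal.bot_lt_coe _


lemma ereal_trichotomy (a : EReal) : a = ⊥ ∨ (∃ r : ℝ, a = (r : EReal)) ∨ a = ⊤ := by
  induction a using EReal.rec with
  | bot => exact Or.inl rfl
  | coe r => exact Or.inr (Or.inl ⟨r, rfl⟩)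
  | top => exact Or.inr (Or.inr rfl)

lemma LF_top_of_Ioi {L : ℝ → EReal} {r u : ℝ} (hb : (⊥ : EReal) < LF L r)
    (hr : LF L r < (u : EReal)) (hS : ∀ x, r < x → (u : EReal) ≤ LF L x) :
    ∀ x, r < x → LF L x = ⊤ := by
  intro x hx
  by_contra hne
  have hxu : (u : EReal) ≤ LF L x := hS x hx
  have hxbot : LF L x ≠ ⊥ := fun h => by simp [h] at hxu
  set C := (LF L x).toReal with hCdef
  have hCe : (C : EReal) = LF L x := EReal.coe_toReal hne hxbot
  set c := (LF L r).toReal with hcdef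
  have hce : (c : EReal) = LF L r := EReal.coe_toReal (ne_top_of_lt hr) hb.ne'
  have hcu : c < u := by rw [← EReal.coe_lt_coe_iff, hce]; exact hr
  set D : ℝ := max (C - c) 0 + 1 with hDdef
  have hD : 0 < D := by positivity
  have hCD : C - c ≤ D := le_trans (le_max_left _ _) (by linarith)
  set l : ℝ := min (1/2) ((u - c)/(2*D)) with hldef
  have hl0 : 0 < l := lt_min (by norm_num) (div_pos (by linarith) (by linarith))
  have hl1 : l < 1 := lt_of_le_of_lt (min_le_left _ _) (by norm_num)
  set y : ℝ := r + l * (x - r) with hydef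
  have hry : r < y := by nlinarith
  have key : LF L y ≤ ((l * C + (1 - l) * c : ℝ) : EReal) := by
    refine iSup₂_le fun t ht => ?_
    rcases ereal_trichotomy (L t) with hLt | ⟨ℓ, hLt⟩ | hLt
    ·
        exfalso
        apply hne
        have h1 : ((t * x : ℝ) : EReal) - L t = ⊤ := by rw [hLt]; exact EReal.coe_sub_bot _
        have h2 : (⊤ : EReal) ≤ LF L x := by
          rw [← h1]
          exact le_iSup₂ (f := fun t (_ : 0 < t) => ((t * x : ℝ) : EReal) - L t) t ht
        exact top_le_iff.1 h2
    ·
        have hb1 : ((t * x : ℝ) : EReal) - L t ≤ LF L x :=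
          le_iSup₂ (f := fun t (_ : 0 < t) => ((t * x : ℝ) : EReal) - L t) t ht
        have hb2 : ((t * r : ℝ) : EReal) - L t ≤ LF L r :=
          le_iSup₂ (f := fun t (_ : 0 < t) => ((t * r : ℝ) : EReal) - L t) t ht
        rw [hLt, ← hCe] at hb1
        rw [hLt, ← hce] at hb2
        rw [← EReal.coe_sub, EReal.coe_le_coe_iff] at hb1 hb2
        rw [hLt, ← EReal.coe_sub, EReal.coe_le_coe_iff]
        have e1 : l * (t * x - ℓ) ≤ l * C := mul_le_mul_of_nonneg_left hb1 hl0.le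
        have e2 : (1 - l) * (t * r - ℓ) ≤ (1 - l) * c :=
          mul_le_mul_of_nonneg_left hb2 (by linarith)
        have : t * y - ℓ = l * (t * x - ℓ) + (1 - l) * (t * r - ℓ) := by
          rw [hydef]; ring
        linarith
    · rw [hLt, EReal.sub_top]; exact bot_le
  have harith : l * C + (1 - l) * c < u := by
    have h3 : l * (C - c) ≤ l * D := mul_le_mul_of_nonneg_left hCD hl0.le
    have h4 : l * D ≤ (u - c)/(2*D) * D := mul_le_mul_of_nonneg_right (min_le_right _ _) hD.le
    have h5 : (u - c)/(2*D) * D = (u - c)/2 := by field_simp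
    nlinarith
  exact absurd (hS y hry) (not_le.2 (lt_of_le_of_lt key (EReal.coe_lt_coe_iff.2 harith)))


variable {Ω : Type*} [MeasurableSpace Ω] (μ : Measure Ω) [IsProbabilityMeasure μ]
  (X : Ω → ℝ) (hX : Measurable X)

set_option linter.unusedSectionVars false
include hX

lemma markov (x t : ℝ) (ht : 0 < t) :
    ENNReal.ofReal (Real.exp (t * x)) * μ {ω | x ≤ X ω} ≤
      ∫⁻ ω, ENNReal.ofReal (Real.exp (t * X ω)) ∂μ := by
  have hset : {ω | x ≤ X ω} =
      {ω | ENNReal.ofReal (Real.exp (t * x)) ≤ ENNReal.ofReal (Real.exp (t * X ω))} := by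
    ext ω
    simp only [mem_setOf_eq, ENNReal.ofReal_le_ofReal_iff (Real.exp_pos _).le,
      Real.exp_le_exp]
    exact (mul_le_mul_iff_right₀ ht).symm
  rw [hset]
  exact mul_meas_ge_le_lintegral₀ ((hX.const_mul t).exp.ennreal_ofReal).aemeasurable _

lemma chernoff (x v : ℝ) (hv : (v : EReal) ≤ LF (cramer μ X) x) :
    μ {ω | x ≤ X ω} ≤ ENNReal.ofReal (Real.exp (-v)) := by
  set A := μ {ω | x ≤ X ω} with hA
  have key : LF (cramer μ X) x ≤ -ENNReal.log A := by
    refine iSup₂_le fun t ht => ?_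
    have h1 := markov μ X hX x t ht
    have h2 : ((t * x : ℝ) : EReal) + ENNReal.log A ≤ cramer μ X t := by
      have := ENNReal.log_le_log_iff.2 h1
      rwa [ENNReal.log_mul_add, ENNReal.log_ofReal_of_pos (Real.exp_pos _),
        Real.log_exp] at this
    exact ereal_shuffle _ h2
  have hlog : ENNReal.log A ≤ ((-v : ℝ) : EReal) := by
    have : (v : EReal) ≤ -ENNReal.log A := hv.trans key
    have := EReal.neg_le_neg_iff.2 this
    rw [neg_neg] at this
    calc ENNReal.log A ≤ -(v : EReal) := by simpa using this
    _ = ((-v : ℝ) : EReal) := by rw [← EReal.coe_neg]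
  calc A = EReal.exp (ENNReal.log A) := (ENNReal.exp_log A).symm
  _ ≤ EReal.exp ((-v : ℝ) : EReal) := EReal.exp_monotone hlog
  _ = ENNReal.ofReal (Real.exp (-v)) := EReal.exp_coe _

lemma chernoff_top (x : ℝ) (h : LF (cramer μ X) x = ⊤) : μ {ω | x ≤ X ω} = 0 := by
  by_contra h0
  have hpos : 0 < μ {ω | x ≤ X ω} := pos_iff_ne_zero.2 h0
  have hbot : (⊥ : EReal) < ENNReal.log (μ {ω | x ≤ X ω}) := by
    simpa using hpos
  rcases EReal.exists_between_coe_real hbot with ⟨y, -, hy2⟩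
  have := chernoff μ X hX x (-y) (by rw [h]; exact le_top)
  have hle : ENNReal.log (μ {ω | x ≤ X ω}) ≤ (y : EReal) := by
    have := ENNReal.log_le_log_iff.2 this
    rwa [ENNReal.log_ofReal_of_pos (Real.exp_pos _), Real.log_exp, neg_neg] at this
  exact absurd hle (not_le.2 hy2)

lemma cramer_le_of_ae_le (m : ℝ) (h : ∀ᵐ ω ∂μ, X ω ≤ m) (t : ℝ) (ht : 0 < t) :
    cramer μ X t ≤ ((t * m : ℝ) : EReal) := by
  have hI : (∫⁻ ω, ENNReal.ofReal (Real.exp (t * X ω)) ∂μ) ≤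
      ENNReal.ofReal (Real.exp (t * m)) := by
    calc (∫⁻ ω, ENNReal.ofReal (Real.exp (t * X ω)) ∂μ)
        ≤ ∫⁻ _, ENNReal.ofReal (Real.exp (t * m)) ∂μ := by
          refine lintegral_mono_ae (h.mono fun ω hω => ?_)
          exact ENNReal.ofReal_le_ofReal (Real.exp_le_exp.2 (by nlinarith))
    _ = ENNReal.ofReal (Real.exp (t * m)) := by simp
  have := ENNReal.log_le_log_iff.2 hI
  rwa [ENNReal.log_ofReal_of_pos (Real.exp_pos _), Real.log_exp] at this

lemma LF_top_of_gt (m x : ℝ) (h : ∀ᵐ ω ∂μ, X ω ≤ m) (hx : m < x) :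
    LF (cramer μ X) x = ⊤ := by
  apply ereal_eq_top_of_forall_coe_le
  intro b
  set t : ℝ := max 1 (b / (x - m)) with htdef
  have ht : 0 < t := lt_of_lt_of_le one_pos (le_max_left _ _)
  have hb : b ≤ t * (x - m) := by
    have h1 : b / (x - m) ≤ t := le_max_right _ _
    have h2 : 0 < x - m := by linarith
    calc b = (b / (x - m)) * (x - m) := by field_simp
    _ ≤ t * (x - m) := by nlinarith
  calc (b : EReal) ≤ ((t * (x - m) : ℝ) : EReal) := EReal.coe_le_coe_iff.2 hb
  _ = ((t * x : ℝ) : EReal) - ((t * m : ℝ) : EReal) := by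
      rw [← EReal.coe_sub]; norm_cast; ring
  _ ≤ ((t * x : ℝ) : EReal) - cramer μ X t :=
      EReal.sub_le_sub le_rfl (cramer_le_of_ae_le μ X hX m h t ht)
  _ ≤ LF (cramer μ X) x := le_iSup₂ (f := fun t (_ : 0 < t) => ((t * x : ℝ) : EReal) - cramer μ X t) t ht

lemma cramer_ge (m t : ℝ) :
    ((t * m : ℝ) : EReal) + ENNReal.log (μ {ω | X ω = m}) ≤ cramer μ X t := by
  have hs : MeasurableSet {ω | X ω = m} := hX (measurableSet_singleton m)
  have h1 : ENNReal.ofReal (Real.exp (t * m)) * μ {ω | X ω = m} ≤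
      ∫⁻ ω, ENNReal.ofReal (Real.exp (t * X ω)) ∂μ := by
    calc ENNReal.ofReal (Real.exp (t * m)) * μ {ω | X ω = m}
        = ∫⁻ _ in {ω | X ω = m}, ENNReal.ofReal (Real.exp (t * m)) ∂μ :=
          (setLIntegral_const _ _).symm
    _ = ∫⁻ ω in {ω | X ω = m}, ENNReal.ofReal (Real.exp (t * X ω)) ∂μ := by
          refine setLIntegral_congr_fun hs (fun ω hω => ?_)
          rw [hω]
    _ ≤ ∫⁻ ω, ENNReal.ofReal (Real.exp (t * X ω)) ∂μ :=
          setLIntegral_le_lintegral _ _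
  have := ENNReal.log_le_log_iff.2 h1
  rwa [ENNReal.log_mul_add, ENNReal.log_ofReal_of_pos (Real.exp_pos _), Real.log_exp] at this

lemma meas_ge_eq_meas_eq (m : ℝ) (h : ∀ᵐ ω ∂μ, X ω ≤ m) :
    μ {ω | m ≤ X ω} = μ {ω | X ω = m} := by
  have h0 : μ {ω | m < X ω} = 0 := by
    have := ae_iff.1 h
    simpa [not_le] using this
  refine le_antisymm ?_ (measure_mono fun ω (hω : X ω = m) => le_of_eq hω.symm)
  calc μ {ω | m ≤ X ω} ≤ μ ({ω | X ω = m} ∪ {ω | m < X ω}) := by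
        refine measure_mono fun ω (hω : m ≤ X ω) => ?_
        rcases eq_or_lt_of_le hω with h' | h'
        · exact Or.inl h'.symm
        · exact Or.inr h'
  _ ≤ μ {ω | X ω = m} + μ {ω | m < X ω} := measure_union_le _ _
  _ = μ {ω | X ω = m} := by rw [h0, add_zero]


end ChernoffAux

open ChernoffAux in
/-- Proposition on when the non-strict inequality fails. The inequality
`P(X ≥ L_X^{*←}(u)) ≤ e^{-u}` fails if and only if `x_max = ess sup X < ∞`,
`p_max = P(X = x_max) > 0` and `u > -ln p_max`. -/
theorem prob_ge_geInv_fails_iff (Ω : Type*) [MeasurableSpace Ω] (μ : Measure Ω)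
    [IsProbabilityMeasure μ] (X : Ω → ℝ) (hX : Measurable X)
    (hfin : ∃ t : ℝ, 0 < t ∧ ∫⁻ ω, ENNReal.ofReal (Real.exp (t * X ω)) ∂μ ≠ ⊤)
    (u : ℝ) :
    ¬ (μ {ω | geInv (cramer μ X) u ≤ (X ω : EReal)} ≤ ENNReal.ofReal (Real.exp (-u))) ↔
      (essSup (fun ω => (X ω : EReal)) μ < ⊤ ∧
        0 < μ {ω | (X ω : EReal) = essSup (fun ω' => (X ω' : EReal)) μ} ∧
        -(ENNReal.log (μ {ω | (X ω : EReal) = essSup (fun ω' => (X ω' : EReal)) μ})) <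
          (u : EReal)) := by
  classical
  constructor
  · -- failure implies the three conditions
    intro hfail
    rw [not_le] at hfail
    by_cases hatop : geInv (cramer μ X) u = ⊤
    · exfalso
      have hempty : {ω | geInv (cramer μ X) u ≤ (X ω : EReal)} = (∅ : Set Ω) := by
        ext ω
        simp only [mem_setOf_eq, mem_empty_iff_false, iff_false, hatop, top_le_iff]
        exact (EReal.coe_lt_top (X ω)).ne
      rw [hempty] at hfail
      simp at hfail
    by_cases habot : geInv (cramer μ X) u = ⊥
    · exfalso
      have hchern_all : ∀ x : ℝ, μ {ω | x ≤ X ω} ≤ ENNReal.ofReal (Real.exp (-u)) := by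
        intro x
        have hlt : sInf ((fun x : ℝ => (x : EReal)) '' {x : ℝ | (u : EReal) ≤ LF (cramer μ X) x})
            < (x : EReal) := by
          rw [show sInf ((fun x : ℝ => (x : EReal)) '' {x : ℝ | (u : EReal) ≤ LF (cramer μ X) x}) = geInv (cramer μ X) u from rfl, habot]
          exact EReal.bot_lt_coe x
        obtain ⟨b, ⟨s, hs, rfl⟩, hblt⟩ := sInf_lt_iff.1 hlt
        have hsx : s ≤ x := (EReal.coe_lt_coe_iff.1 hblt).le
        exact le_trans (measure_mono fun ω (hω : x ≤ X ω) => hsx.trans hω)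
          (chernoff μ X hX s u hs)
      have huniv : (1 : ℝ≥0∞) ≤ ENNReal.ofReal (Real.exp (-u)) := by
        have hU : (univ : Set Ω) = ⋃ n : ℕ, {ω | -(n : ℝ) ≤ X ω} := by
          ext ω
          simp only [mem_univ, mem_iUnion, mem_setOf_eq, true_iff]
          obtain ⟨n, hn⟩ := exists_nat_ge (-(X ω))
          exact ⟨n, by linarith⟩
        have hmono : Monotone (fun n : ℕ => {ω | -(n : ℝ) ≤ X ω}) := by
          intro i j hij ω (hω : -(i:ℝ) ≤ X ω)
          have : -(j:ℝ) ≤ -(i:ℝ) := by exact_mod_cast neg_le_neg (by exact_mod_cast hij)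
          exact this.trans hω
        calc (1 : ℝ≥0∞) = μ univ := measure_univ.symm
        _ = μ (⋃ n : ℕ, {ω | -(n : ℝ) ≤ X ω}) := by rw [hU]
        _ = ⨆ n : ℕ, μ {ω | -(n : ℝ) ≤ X ω} := (hmono.directed_le).measure_iUnion
        _ ≤ ENNReal.ofReal (Real.exp (-u)) := iSup_le fun n => hchern_all _
      exact absurd (hfail.trans_le (prob_le_one.trans huniv)) (lt_irrefl _)
    -- main case : geInv is a real number r
    set r : ℝ := (geInv (cramer μ X) u).toReal with hrdef
    have hr : (r : EReal) = geInv (cramer μ X) u := EReal.coe_toReal hatop habot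
    have hEr : {ω | geInv (cramer μ X) u ≤ (X ω : EReal)} = {ω | r ≤ X ω} := by
      ext ω
      rw [mem_setOf_eq, mem_setOf_eq, ← hr, EReal.coe_le_coe_iff]
    rw [hEr] at hfail
    have hrS : ¬ ((u : EReal) ≤ LF (cramer μ X) r) := fun hmem =>
      absurd hfail (not_lt.2 (chernoff μ X hX r u hmem))
    have hrlt : LF (cramer μ X) r < (u : EReal) := not_le.1 hrS
    have hbot : (⊥ : EReal) < LF (cramer μ X) r := by
      obtain ⟨t0, ht0, hI⟩ := hfin
      have hcne : cramer μ X t0 ≠ ⊤ := by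
        simp only [cramer, ne_eq, ENNReal.log_eq_top_iff]
        exact hI
      exact lt_of_lt_of_le (bot_lt_coe_sub hcne (t0 * r))
        (le_iSup₂ (f := fun t (_ : 0 < t) => ((t * r : ℝ) : EReal) - cramer μ X t) t0 ht0)
    have hup : ∀ x, r < x → (u : EReal) ≤ LF (cramer μ X) x := by
      intro x hx
      have hlt : sInf ((fun x : ℝ => (x : EReal)) '' {x : ℝ | (u : EReal) ≤ LF (cramer μ X) x})
          < (x : EReal) := by
        rw [show sInf ((fun x : ℝ => (x : EReal)) '' {x : ℝ | (u : EReal) ≤ LF (cramer μ X) x}) = geInv (cramer μ X) u from rfl, ← hr]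
        exact EReal.coe_lt_coe_iff.2 hx
      obtain ⟨b, ⟨s, hs, rfl⟩, hblt⟩ := sInf_lt_iff.1 hlt
      exact le_trans hs (LF_mono _ (EReal.coe_lt_coe_iff.1 hblt).le)
    have htop : ∀ x, r < x → LF (cramer μ X) x = ⊤ := LF_top_of_Ioi hbot hrlt hup
    have hgt0 : μ {ω | r < X ω} = 0 := by
      have hsub : {ω | r < X ω} ⊆ ⋃ n : ℕ, {ω | r + 1/(n+1) ≤ X ω} := by
        intro ω hω
        obtain ⟨n, hn⟩ := exists_nat_one_div_lt (sub_pos.2 (show r < X ω from hω))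
        exact mem_iUnion.2 ⟨n, by simp only [mem_setOf_eq]; linarith⟩
      refine measure_mono_null hsub (measure_iUnion_null fun n => ?_)
      exact chernoff_top μ X hX _ (htop _ (lt_add_of_pos_right r (by positivity)))
    have hae : ∀ᵐ ω ∂μ, X ω ≤ r := by
      rw [ae_iff]
      simpa [not_le] using hgt0
    have hmeq : μ {ω | r ≤ X ω} = μ {ω | X ω = r} := meas_ge_eq_meas_eq μ X hX r hae
    rw [hmeq] at hfail
    have hppos : 0 < μ {ω | X ω = r} := lt_of_le_of_lt zero_le hfail
    have hesssup : essSup (fun ω => (X ω : EReal)) μ = (r : EReal) := by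
      refine le_antisymm (essSup_le_of_ae_le _ (hae.mono fun ω hω => EReal.coe_le_coe_iff.2 hω)) ?_
      by_contra hlt
      rw [not_le] at hlt
      have hael := ae_lt_of_essSup_lt hlt
      have : μ {ω | X ω = r} = 0 := by
        refine measure_mono_null (fun ω (hω : X ω = r) => ?_) (ae_iff.1 hael)
        simp only [mem_setOf_eq, hω, not_lt, le_refl]
      exact absurd this hppos.ne'
    have hsetrw : {ω | (X ω : EReal) = essSup (fun ω' => (X ω' : EReal)) μ} = {ω | X ω = r} := by
      ext ω
      rw [mem_setOf_eq, mem_setOf_eq, hesssup, EReal.coe_eq_coe_iff]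
    refine ⟨by rw [hesssup]; exact EReal.coe_lt_top r, by rw [hsetrw]; exact hppos, ?_⟩
    rw [hsetrw]
    rw [EReal.neg_lt_comm]
    have := ENNReal.log_lt_log_iff.2 hfail
    rwa [ENNReal.log_ofReal_of_pos (Real.exp_pos _), Real.log_exp] at this
  · -- the three conditions imply failure
    rintro ⟨hMtop, hp, hu⟩
    have hMbot : essSup (fun ω => (X ω : EReal)) μ ≠ ⊥ := by
      intro hb
      rw [hb] at hp
      have : {ω | (X ω : EReal) = (⊥ : EReal)} = (∅ : Set Ω) := by
        ext ω; simp [(EReal.bot_lt_coe (X ω)).ne']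
      rw [this] at hp
      simp at hp
    set m : ℝ := (essSup (fun ω => (X ω : EReal)) μ).toReal with hmdef
    have hm : (m : EReal) = essSup (fun ω => (X ω : EReal)) μ :=
      EReal.coe_toReal hMtop.ne hMbot
    have hsetm : {ω | (X ω : EReal) = essSup (fun ω' => (X ω' : EReal)) μ} = {ω | X ω = m} := by
      ext ω
      rw [mem_setOf_eq, mem_setOf_eq, ← hm, EReal.coe_eq_coe_iff]
    rw [hsetm] at hp hu
    have hae : ∀ᵐ ω ∂μ, X ω ≤ m := by
      have h1 : ∀ᵐ ω ∂μ, (X ω : EReal) ≤ essSup (fun ω' => (X ω' : EReal)) μ := ae_le_essSup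
      refine h1.mono fun ω hω => ?_
      rw [← hm] at hω
      exact EReal.coe_le_coe_iff.1 hω
    have hLFm : LF (cramer μ X) m ≤ -(ENNReal.log (μ {ω | X ω = m})) :=
      iSup₂_le fun t ht => ereal_shuffle _ (cramer_ge μ X hX m t)
    have hLFm_lt : LF (cramer μ X) m < (u : EReal) := lt_of_le_of_lt hLFm hu
    have hSI : {x : ℝ | (u : EReal) ≤ LF (cramer μ X) x} = Ioi m := by
      ext x
      simp only [mem_setOf_eq, mem_Ioi]
      constructor
      · intro hx
        by_contra hxm
        rw [not_lt] at hxm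
        exact absurd (hx.trans (LF_mono _ hxm)) (not_le.2 hLFm_lt)
      · intro hx
        rw [LF_top_of_gt μ X hX m x hae hx]
        exact le_top
    have ha : geInv (cramer μ X) u = (m : EReal) := by
      rw [geInv, hSI, sInf_image_Ioi]
    have hEr : {ω | geInv (cramer μ X) u ≤ (X ω : EReal)} = {ω | m ≤ X ω} := by
      ext ω
      rw [mem_setOf_eq, mem_setOf_eq, ha, EReal.coe_le_coe_iff]
    rw [not_le, hEr, meas_ge_eq_meas_eq μ X hX m hae]
    have hlog : ((-u : ℝ) : EReal) < ENNReal.log (μ {ω | X ω = m}) := by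
      rw [EReal.coe_neg]
      exact EReal.neg_lt_comm.1 hu
    calc ENNReal.ofReal (Real.exp (-u)) = EReal.exp ((-u : ℝ) : EReal) := (EReal.exp_coe _).symm
    _ < EReal.exp (ENNReal.log (μ {ω | X ω = m})) := EReal.exp_lt_exp_iff.2 hlog
    _ = μ {ω | X ω = m} := ENNReal.exp_log _
end

section
/- Let X be a real-valued random variable with E e^{tX} < ∞ for some t > 0, and let L := L_X. Then sup{x ∈ ℝ : L^*(x) < ∞} = sup supp(X), where both sides take values in (−∞,∞] and sup ∅ := −∞ on the left-hand side (the right-hand side is > −∞ since X is real-valued). -/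
open Set MeasureTheory Filter

/-- Lemma, first part. `x_∞ = sup dom(L_X^*)` equals
`x_max = sup supp X` (the essential supremum of `X`), both in `[-∞,∞]` with
`sup ∅ = -∞` on the left. -/
theorem sup_dom_LF_cramer_eq_essSup (Ω : Type*) [MeasurableSpace Ω] (μ : Measure Ω)
    [IsProbabilityMeasure μ] (X : Ω → ℝ) (hX : Measurable X)
    (hfin : ∃ t : ℝ, 0 < t ∧ ∫⁻ ω, ENNReal.ofReal (Real.exp (t * X ω)) ∂μ ≠ ⊤) :
    sSup ((fun x : ℝ => (x : EReal)) '' {x : ℝ | LF (cramer μ X) x < ⊤}) =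
      essSup (fun ω => (X ω : EReal)) μ := by
  classical
  set M := essSup (fun ω => (X ω : EReal)) μ with hMdef
  set S := sSup ((fun x : ℝ => (x : EReal)) '' {x : ℝ | LF (cramer μ X) x < ⊤}) with hSdef
  apply le_antisymm
  · -- S ≤ M
    apply sSup_le
    rintro _ ⟨x, hx, rfl⟩
    simp only [Set.mem_setOf_eq] at hx
    by_contra hcon
    push_neg at hcon
    obtain ⟨m, hMm, hmx⟩ := EReal.exists_between_coe_real hcon
    have hmx' : (m : ℝ) < x := by exact_mod_cast hmx
    have hae : ∀ᵐ ω ∂μ, X ω ≤ m := by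
      filter_upwards [ae_lt_of_essSup_lt hMm] with ω hω
      exact_mod_cast hω.le
    have hL : ∀ t : ℝ, 0 < t → cramer μ X t ≤ ((t * m : ℝ) : EReal) := by
      intro t ht
      have hint : ∫⁻ ω, ENNReal.ofReal (Real.exp (t * X ω)) ∂μ
          ≤ ENNReal.ofReal (Real.exp (t * m)) := by
        calc ∫⁻ ω, ENNReal.ofReal (Real.exp (t * X ω)) ∂μ
            ≤ ∫⁻ _, ENNReal.ofReal (Real.exp (t * m)) ∂μ := by
              apply lintegral_mono_ae
              filter_upwards [hae] with ω hω
              exact ENNReal.ofReal_le_ofReal (Real.exp_le_exp.2 (by nlinarith))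
          _ = ENNReal.ofReal (Real.exp (t * m)) := by simp [lintegral_const]
      calc cramer μ X t ≤ ENNReal.log (ENNReal.ofReal (Real.exp (t * m))) :=
            ENNReal.log_monotone hint
        _ = ((t * m : ℝ) : EReal) := by
            rw [ENNReal.log_ofReal_of_pos (Real.exp_pos _), Real.log_exp]
    have htop : LF (cramer μ X) x = ⊤ := by
      rw [EReal.eq_top_iff_forall_lt]
      intro r
      have hxm : 0 < x - m := sub_pos.2 hmx'
      set t := (max r 0 + 1) / (x - m) with htdef
      have ht : 0 < t := div_pos (by positivity) hxm
      have h1 : ((t * x - t * m : ℝ) : EReal) ≤ ((t * x : ℝ) : EReal) - cramer μ X t := by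
        rw [EReal.coe_sub]
        exact EReal.sub_le_sub le_rfl (hL t ht)
      have h2 : (r : EReal) < ((t * x - t * m : ℝ) : EReal) := by
        rw [EReal.coe_lt_coe_iff]
        have : t * x - t * m = max r 0 + 1 := by
          rw [htdef, ← mul_sub, div_mul_cancel₀ _ hxm.ne']
        rw [this]
        have := le_max_left r 0
        linarith
      refine lt_of_lt_of_le h2 (le_trans h1 ?_)
      exact le_iSup₂ (f := fun t (_ : 0 < t) => ((t * x : ℝ) : EReal) - cramer μ X t) t ht
    exact hx.ne htop
  · -- M ≤ S
    have key : ∀ c : ℝ, (c : EReal) < M → (c : EReal) ≤ S := by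
      intro c hc
      apply le_sSup
      refine ⟨c, ?_, rfl⟩
      simp only [Set.mem_setOf_eq]
      have hA : μ {ω | c < X ω} ≠ 0 := by
        intro h0
        have hae : ∀ᵐ ω ∂μ, (X ω : EReal) ≤ (c : EReal) := by
          rw [ae_iff]
          convert h0 using 2
          ext ω
          simp [not_le, EReal.coe_lt_coe_iff]
        exact absurd (essSup_le_of_ae_le _ hae) hc.not_ge
      set r := (ENNReal.log (μ {ω | c < X ω})).toReal with hrdef
      have hrlog : ENNReal.log (μ {ω | c < X ω}) = (r : EReal) := by
        rw [hrdef, EReal.coe_toReal]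
        · simp [measure_ne_top μ _]
        · simp [hA]
      have hL : ∀ t : ℝ, 0 < t → ((t * c + r : ℝ) : EReal) ≤ cramer μ X t := by
        intro t ht
        have hle : ENNReal.ofReal (Real.exp (t * c)) * μ {ω | c < X ω}
            ≤ ∫⁻ ω, ENNReal.ofReal (Real.exp (t * X ω)) ∂μ := by
          rw [← setLIntegral_const {ω | c < X ω} _]
          refine le_trans (setLIntegral_mono' (measurableSet_lt measurable_const hX) ?_)
            (setLIntegral_le_lintegral _ _)
          intro ω hω
          exact ENNReal.ofReal_le_ofReal (Real.exp_le_exp.2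
            (by nlinarith [Set.mem_setOf_eq ▸ hω]))
        calc ((t * c + r : ℝ) : EReal)
            = ENNReal.log (ENNReal.ofReal (Real.exp (t * c)) * μ {ω | c < X ω}) := by
              rw [ENNReal.log_mul_add, ENNReal.log_ofReal_of_pos (Real.exp_pos _),
                Real.log_exp, hrlog, EReal.coe_add]
          _ ≤ cramer μ X t := ENNReal.log_monotone hle
      have hlt : LF (cramer μ X) c < ⊤ := by
        refine lt_of_le_of_lt (iSup₂_le fun t ht => ?_) (EReal.coe_lt_top (-r))
        calc ((t * c : ℝ) : EReal) - cramer μ X t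
            ≤ ((t * c : ℝ) : EReal) - ((t * c + r : ℝ) : EReal) :=
              EReal.sub_le_sub le_rfl (hL t ht)
          _ = ((-r : ℝ) : EReal) := by rw [← EReal.coe_sub]; norm_num
      exact hlt
    by_contra hcon
    push_neg at hcon
    obtain ⟨z, h1, h2⟩ := EReal.exists_between_coe_real hcon
    exact absurd (key z h2) (not_le.2 h1)
end

section
/- Let X be a real-valued random variable with E e^{tX} < ∞ for some t > 0, and suppose x_max := sup supp(X) < ∞. Then L_X^*(x_max) = −ln P(X = x_max), where −ln 0 := ∞; moreover, lim_{x ↑ x_max} L_X^*(x) (the value u_∞) equals L_X^*(x_max) when P(X = x_max) > 0. -/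
open Set MeasureTheory Filter

lemma log_iInf2 (f : ℝ → ENNReal) :
    ENNReal.log (⨅ (t : ℝ) (_ : 0 < t), f t) = ⨅ (t : ℝ) (_ : 0 < t), ENNReal.log (f t) := by
  refine le_antisymm (le_iInf₂ fun t ht => ENNReal.log_monotone (iInf₂_le t ht)) ?_
  obtain ⟨x, hx⟩ := ENNReal.log_surjective (⨅ (t : ℝ) (_ : 0 < t), ENNReal.log (f t))
  rw [← hx, ENNReal.log_le_log_iff]
  refine le_iInf₂ fun t ht => ?_
  rw [← ENNReal.log_le_log_iff, hx]
  exact iInf₂_le t ht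

lemma iSup2_neg_aux (f : ℝ → EReal) :
    (⨆ (t : ℝ) (_ : 0 < t), -(f t)) = -(⨅ (t : ℝ) (_ : 0 < t), f t) := by
  refine le_antisymm (iSup₂_le fun t ht => ?_) ?_
  · exact EReal.neg_le_neg_iff.mpr (iInf₂_le t ht)
  · rw [EReal.neg_le]
    refine le_iInf₂ fun t ht => ?_
    rw [← EReal.neg_le_neg_iff, neg_neg]
    exact le_iSup₂ (f := fun t (_ : 0 < t) => -(f t)) t ht

lemma ereal_cases (a : EReal) : a = ⊥ ∨ (∃ r : ℝ, a = r) ∨ a = ⊤ := by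
  induction a using EReal.rec with
  | bot => exact Or.inl rfl
  | coe r => exact Or.inr (Or.inl ⟨r, rfl⟩)
  | top => exact Or.inr (Or.inr rfl)


/-- Lemma, second part. If `x_max = ess sup X < ∞` (so `x_max = c` for
a real `c`), then `L_X^*(x_max) = -ln P(X = x_max)` (with `-ln 0 = ∞`); moreover, when
`P(X = x_max) > 0`, the left limit `u_∞ = lim_{x↑x_max} L_X^*(x)` (the supremum of the
nondecreasing function `L_X^*` over `x < x_max`) equals `L_X^*(x_max)`. -/
theorem LF_cramer_at_essSup (Ω : Type*) [MeasurableSpace Ω] (μ : Measure Ω)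
    [IsProbabilityMeasure μ] (X : Ω → ℝ) (hX : Measurable X)
    (hfin : ∃ t : ℝ, 0 < t ∧ ∫⁻ ω, ENNReal.ofReal (Real.exp (t * X ω)) ∂μ ≠ ⊤)
    (c : ℝ) (hc : essSup (fun ω => (X ω : EReal)) μ = (c : EReal)) :
    LF (cramer μ X) c = -(ENNReal.log (μ {ω | X ω = c})) ∧
      (0 < μ {ω | X ω = c} →
        (⨆ (x : ℝ) (_ : x < c), LF (cramer μ X) x) = LF (cramer μ X) c) := by
  obtain ⟨t₀, ht₀, hIt₀⟩ := hfin
  set I : ℝ → ENNReal := fun t => ∫⁻ ω, ENNReal.ofReal (Real.exp (t * X ω)) ∂μ with hI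
  set J : ℝ → ENNReal := fun t => ∫⁻ ω, ENNReal.ofReal (Real.exp (t * (X ω - c))) ∂μ with hJ
  set p : ENNReal := μ {ω | X ω = c} with hp
  have hset : MeasurableSet {ω | X ω = c} := hX (measurableSet_singleton c)
  -- a.e. X ≤ c
  have hae : ∀ᵐ ω ∂μ, X ω ≤ c := by
    have h := ae_le_essSup (f := fun ω => (X ω : EReal)) (μ := μ)
    rw [hc] at h
    filter_upwards [h] with ω hω
    exact_mod_cast hω
  -- J in terms of I
  have hJI : ∀ t : ℝ, J t = I t * ENNReal.ofReal (Real.exp (-(t * c))) := by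
    intro t
    rw [hJ, hI]
    simp only
    have hpt : ∀ ω, ENNReal.ofReal (Real.exp (t * (X ω - c))) =
        ENNReal.ofReal (Real.exp (t * X ω)) * ENNReal.ofReal (Real.exp (-(t * c))) := by
      intro ω
      rw [← ENNReal.ofReal_mul (Real.exp_pos _).le, ← Real.exp_add]
      ring_nf
    simp_rw [hpt]
    exact lintegral_mul_const _ ((Real.measurable_exp.comp (hX.const_mul t)).ennreal_ofReal)
  have hJt₀ : J t₀ ≠ ⊤ := by
    rw [hJI]
    exact ENNReal.mul_ne_top hIt₀ ENNReal.ofReal_ne_top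
  -- key pointwise identity
  have hkey : ∀ t : ℝ, ((t * c : ℝ) : EReal) - cramer μ X t = -(ENNReal.log (J t)) := by
    intro t
    have hlog : ENNReal.log (J t) = ENNReal.log (I t) + ((-(t * c) : ℝ) : EReal) := by
      rw [hJI, ENNReal.log_mul_add, ENNReal.log_ofReal_of_pos (Real.exp_pos _),
        Real.log_exp]
    rw [hlog]
    show ((t * c : ℝ) : EReal) - ENNReal.log (I t) = _
    rcases ereal_cases (ENNReal.log (I t)) with h | ⟨r, h⟩ | h <;> rw [h]
    · rw [EReal.coe_sub_bot, EReal.bot_add, EReal.neg_bot]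
    · rw [← EReal.coe_sub, ← EReal.coe_add, ← EReal.coe_neg]
      norm_cast
      ring
    · rw [EReal.sub_top, EReal.top_add_coe, EReal.neg_top]
  -- lower bound: p ≤ J t
  have hlow : ∀ t : ℝ, p ≤ J t := by
    intro t
    have hmono : ∀ ω, ({ω | X ω = c}).indicator (1 : Ω → ENNReal) ω ≤
        ENNReal.ofReal (Real.exp (t * (X ω - c))) := by
      intro ω
      by_cases h : X ω = c
      · simp [Set.indicator_of_mem, h]
      · simp [Set.indicator_of_notMem, h]
    calc p = ∫⁻ ω, ({ω | X ω = c}).indicator (1 : Ω → ENNReal) ω ∂μ :=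
          (lintegral_indicator_one hset).symm
      _ ≤ J t := lintegral_mono hmono
  -- tendsto
  have htend : Tendsto (fun n : ℕ => J (t₀ + n)) atTop (nhds p) := by
    have h := tendsto_lintegral_of_dominated_convergence
        (μ := μ) (F := fun (n : ℕ) ω => ENNReal.ofReal (Real.exp ((t₀ + n) * (X ω - c))))
        (f := ({ω | X ω = c}).indicator (1 : Ω → ENNReal))
        (bound := fun ω => ENNReal.ofReal (Real.exp (t₀ * (X ω - c))))
        (fun n => (Real.measurable_exp.comp ((hX.sub_const c).const_mul _)).ennreal_ofReal)
        ?_ ?_ ?_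
    · rw [lintegral_indicator_one hset] at h
      exact h
    · intro n
      filter_upwards [hae] with ω hω
      apply ENNReal.ofReal_le_ofReal
      apply Real.exp_le_exp.mpr
      have hd : X ω - c ≤ 0 := by linarith
      nlinarith [Nat.cast_nonneg (α := ℝ) n]
    · exact hJt₀
    · filter_upwards [hae] with ω hω
      by_cases h : X ω = c
      · simp only [h, sub_self, mul_zero, Real.exp_zero, ENNReal.ofReal_one]
        rw [Set.indicator_of_mem (by simpa using h)]
        exact tendsto_const_nhds
      · rw [Set.indicator_of_notMem (by simpa using h)]
        have hd : X ω - c < 0 :=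
          lt_of_le_of_ne (by linarith) (by intro hh; exact h (by linarith))
        have h1 : Tendsto (fun n : ℕ => (t₀ + (n : ℝ)) * (X ω - c)) atTop atBot :=
          Tendsto.atTop_mul_neg hd
            (tendsto_atTop_add_const_left _ t₀ tendsto_natCast_atTop_atTop)
            tendsto_const_nhds
        have h2 := Real.tendsto_exp_atBot.comp h1
        have h3 := (ENNReal.continuous_ofReal.tendsto 0).comp h2
        rw [ENNReal.ofReal_zero] at h3
        exact h3
  -- the infimum
  have hinf : (⨅ (t : ℝ) (_ : 0 < t), J t) = p := by
    refine le_antisymm ?_ (le_iInf₂ fun t _ => hlow t)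
    refine ge_of_tendsto htend (Eventually.of_forall fun n => ?_)
    exact iInf₂_le (t₀ + n) (by positivity)
  -- Part 1
  have part1 : LF (cramer μ X) c = -(ENNReal.log p) := by
    rw [LF]
    calc (⨆ (t : ℝ) (_ : 0 < t), ((t * c : ℝ) : EReal) - cramer μ X t)
        = ⨆ (t : ℝ) (_ : 0 < t), -(ENNReal.log (J t)) := by simp_rw [hkey]
      _ = -(⨅ (t : ℝ) (_ : 0 < t), ENNReal.log (J t)) := iSup2_neg_aux _
      _ = -(ENNReal.log (⨅ (t : ℝ) (_ : 0 < t), J t)) := by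
          rw [log_iInf2]
      _ = -(ENNReal.log p) := by rw [hinf]
  refine ⟨part1, fun _ => ?_⟩
  -- Part 2 (holds unconditionally)
  refine le_antisymm (iSup₂_le fun x hx => ?_) (iSup₂_le fun t ht => ?_)
  · -- monotonicity of LF
    refine iSup₂_mono fun t ht => ?_
    exact EReal.sub_le_sub (EReal.coe_le_coe_iff.mpr (by nlinarith)) le_rfl
  · -- LF c ≤ sup over x < c
    rcases ereal_cases (cramer μ X t) with h | ⟨r, h⟩ | h <;> rw [h]
    · rw [EReal.coe_sub_bot]
      refine le_iSup₂_of_le (c - 1) (by linarith) ?_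
      rw [LF]
      refine le_iSup₂_of_le t ht ?_
      rw [h, EReal.coe_sub_bot]
    · rw [← EReal.coe_sub]
      refine EReal.ge_of_forall_gt_iff_ge.mp fun z hz => ?_
      rw [EReal.coe_lt_coe_iff] at hz
      set x0 : ℝ := c - (t * c - r - z) / t with hx0
      have hx0c : x0 < c := by
        have h2 : 0 < (t * c - r - z) / t := div_pos (by linarith) ht
        rw [hx0]; linarith
      have hval : t * x0 - r = z := by
        rw [hx0]; field_simp; ring
      refine le_iSup₂_of_le x0 hx0c ?_
      rw [LF]
      refine le_iSup₂_of_le t ht ?_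
      rw [h, ← EReal.coe_sub, hval]
    · rw [EReal.sub_top]; exact bot_le
end
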